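/- arXiv:1801.03536 — 2 statements merged into one kernel-verified Lean document; each statement's English description precedes it below -/
import Mathlib

section
/- Let k ≥ 3C² be an integer. If the substitution σ is not unilaterally recognizable, then for each p ∈ ℕ there exist integers i_p ∈ E₁, j_p ∉ E₁, i′_p, j′_p ≥ 0, h_p, ℓ_p ≥ 1 and words α_p, γ′_p ∈ A* and γ_p ∈ A⁺ such that: u_{[i_p, i_p+ℓ_p)} = u_{[j_p, j_p+ℓ_p)}; the sequence {α_p, σ^p(u_{i′_p}), σ^p(u_{i′_p+1}), …, σ^p(u_{i′_p+k−1})} is a natural p-cutting of u_{[i_p, i_p+ℓ_p)}; and the sequence {γ_p, σ^p(u_{j′_p}), σ^p(u_{j′_p+1}), …, σ^p(u_{j′_p+h_p−1}), γ′_p} is a natural p-cutting of u_{[j_p+|α_p|, j_p+ℓ_p)}. -/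
open List Filter

section Defs

variable {A : Type*}

/-- The segment `u_[i,j)` of the sequence `u`. -/
def seg (u : ℕ → A) (i j : ℕ) : List A :=
  (List.range (j - i)).map fun k => u (i + k)

/-- A substitution applied to a word, letter by letter. -/
def substWord (σ : A → List A) (w : List A) : List A := w.flatMap σ

/-- `σ^p` applied to a word. -/
def substPow (σ : A → List A) (p : ℕ) (w : List A) : List A := (substWord σ)^[p] w

/-- A substitution is primitive if some power of it sends every letter to a word
containing every letter. -/
def IsPrimitiveSubst (σ : A → List A) : Prop :=
  ∃ k : ℕ, ∀ a b : A, a ∈ substPow σ k [b]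

/-- `u` is a fixed point of `σ`: the image of every prefix of `u` is again a prefix of `u`. -/
def IsFixedPoint (σ : A → List A) (u : ℕ → A) : Prop :=
  ∀ m : ℕ, substWord σ (seg u 0 m) = seg u 0 (substWord σ (seg u 0 m)).length

/-- `u` is aperiodic under the left shift: `T^i u ≠ u` for all `i ≥ 1`. -/
def AperiodicSeq (u : ℕ → A) : Prop := ∀ i : ℕ, 1 ≤ i → (fun n => u (n + i)) ≠ u

/-- The set `E_p` of natural `p`-cutting points. -/
def cutPoints (σ : A → List A) (u : ℕ → A) (p : ℕ) : Set ℕ :=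
  { m | ∃ n : ℕ, m = (substPow σ p (seg u 0 n)).length }

/-- Unilateral recognizability of `σ` (with fixed point `u`). -/
def UnilaterallyRecognizable (σ : A → List A) (u : ℕ → A) : Prop :=
  ∃ L : ℕ, 1 ≤ L ∧ ∀ i j : ℕ,
    seg u i (i + L) = seg u j (j + L) → i ∈ cutPoints σ u 1 → j ∈ cutPoints σ u 1

/-- `L_n(u)`: the set of factors of `u` of length `n`. -/
def factors (u : ℕ → A) (n : ℕ) : Set (List A) := { w | ∃ i : ℕ, w = seg u i (i + n) }

/-- `L(u)`: the language of `u` (including the empty word). -/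
def lang (u : ℕ → A) : Set (List A) := { w | ∃ i n : ℕ, w = seg u i (i + n) }

/-- `w^n`: the concatenation of `n` copies of `w`. -/
def wpow (w : List A) (n : ℕ) : List A := (List.replicate n w).flatten

/-- A nonempty word `v` is primitive if `v = w^n` with `w` nonempty forces `w = v`. -/
def PrimitiveWord (v : List A) : Prop :=
  ∀ w : List A, w ≠ [] → ∀ n : ℕ, 1 ≤ n → v = wpow w n → w = v

/-- `g` is a gap of occurrences of `w` in `u` if every interval of length `g` in `ℤ₊`
contains an occurrence of `w`. -/
def IsGap (u : ℕ → A) (w : List A) (g : ℕ) : Prop := ∀ i : ℕ, w <:+: seg u i (i + g)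

/-- The minimal gap of a word. -/
noncomputable def minGap (u : ℕ → A) (w : List A) : ℕ := sInf { g | IsGap u w g }

/-- `g`: the maximum over `w ∈ L₂(u)` of the minimal gap of `w`. -/
noncomputable def gapConst (u : ℕ → A) : ℕ :=
  sSup { m | ∃ w ∈ factors u 2, m = minGap u w }

/-- A natural `p`-cutting `{α, σ^p(u_{i'}), …, σ^p(u_{i'+k-1}), β}` of `u_[i,i+ℓ)`. -/
def IsNaturalCutting (σ : A → List A) (u : ℕ → A) (p i ℓ : ℕ)
    (α : List A) (i' k : ℕ) (β : List A) : Prop :=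
  1 ≤ k ∧
  α <:+ substPow σ p [u (i' - 1)] ∧
  β <+: substPow σ p [u (i' + k)] ∧
  seg u i (i + ℓ) = α ++ substPow σ p (seg u i' (i' + k)) ++ β ∧
  i + α.length = (substPow σ p (seg u 0 i')).length

section Fin

variable [Fintype A] [Nonempty A] [DecidableEq A]

/-- The incidence matrix of a substitution: the `(a,b)` entry is `|σ(a)|_b`. -/
def incMatrix (σ : A → List A) : Matrix A A ℕ := Matrix.of fun a b => (σ a).count b

/-- The incidence matrix as a real matrix. -/
noncomputable def incMatrixR (σ : A → List A) : Matrix A A ℝ :=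
  Matrix.of fun a b => ((σ a).count b : ℝ)

/-- `S_p = max_{a ∈ A} |σ^p(a)|`. -/
def Sp (σ : A → List A) (p : ℕ) : ℕ :=
  Finset.univ.sup' Finset.univ_nonempty fun a => (substPow σ p [a]).length

/-- `I_p = min_{a ∈ A} |σ^p(a)|`. -/
def Ip (σ : A → List A) (p : ℕ) : ℕ :=
  Finset.univ.inf' Finset.univ_nonempty fun a => (substPow σ p [a]).length

/-- `C = ⌈(max_b β_b)/(min_b β_b)⌉` for a positive eigenvector `β`. -/
noncomputable def Cst (β : A → ℝ) : ℕ :=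
  ⌈(Finset.univ.sup' Finset.univ_nonempty β) / (Finset.univ.inf' Finset.univ_nonempty β)⌉₊

/-- `K = ⌈λ C² max{2(g+1), (#A)²}⌉`. -/
noncomputable def Kst (u : ℕ → A) (lam : ℝ) (β : A → ℝ) : ℕ :=
  ⌈lam * (Cst β : ℝ) ^ 2 *
    max (2 * ((gapConst u : ℝ) + 1)) ((Fintype.card A : ℝ) ^ 2)⌉₊

/-- The constant `p₀` of Lemma 4.2. -/
noncomputable def p0 (u : ℕ → A) (lam : ℝ) (β : A → ℝ) : ℕ :=
  (Kst u lam β) ^ 2 * ((Cst β) ^ 4 * (Kst u lam β + 1) + 2 * (Cst β) ^ 2 + 1) *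
    (∑ n ∈ Finset.Icc ((Cst β) ^ 2 * (Kst u lam β + 1) + 2)
        ((Kst u lam β + 1) * (Cst β) ^ 6 + 2 * (Cst β) ^ 4 + (Cst β) ^ 2 + 2), n) + 1

/-- The constant `L₀ = (C⁴(K+1)+2C²+1) S_{p₀}`. -/
noncomputable def L0 (σ : A → List A) (u : ℕ → A) (lam : ℝ) (β : A → ℝ) : ℕ :=
  ((Cst β) ^ 4 * (Kst u lam β + 1) + 2 * (Cst β) ^ 2 + 1) * Sp σ (p0 u lam β)

/-- The ℓ¹ norm of a vector. -/
def l1norm (f : A → ℝ) : ℝ := ∑ a, |f a|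

/-- The projective metric on positive row vectors. -/
noncomputable def projMetric (x y : A → ℝ) : ℝ :=
  Real.log ((Finset.univ.sup' Finset.univ_nonempty fun a => x a / y a) /
    (Finset.univ.inf' Finset.univ_nonempty fun a => x a / y a))

/-- The Birkhoff contraction coefficient of a matrix. -/
noncomputable def birkhoff (M : Matrix A A ℝ) : ℝ :=
  sSup { r | ∃ x y : A → ℝ, (∀ a, 0 < x a) ∧ (∀ a, 0 < y a) ∧
    LinearIndependent ℝ ![x, y] ∧
    r = projMetric (Matrix.vecMul x M) (Matrix.vecMul y M) / projMetric x y }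

end Fin

/-- Membership in the vertex set `V^*`: pairs `(xac, ybc)` of factors of `u` of length
`N + L₁ + 1` with `a ≠ b` and `|c| = L₁`. -/
def memVstar (u : ℕ → A) (N L₁ : ℕ) (p : List A × List A) : Prop :=
  ∃ (x y c : List A) (a b : A), a ≠ b ∧
    x.length = N ∧ y.length = N ∧ c.length = L₁ ∧
    p.1 = x ++ a :: c ∧ p.2 = y ++ b :: c ∧
    p.1 ∈ factors u (N + L₁ + 1) ∧ p.2 ∈ factors u (N + L₁ + 1)

/-- An edge between representatives: there is a word `w` with `s'w` a suffix of `σ(s)` and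
`t'w` a suffix of `σ(t)`. -/
def edgeRep (σ : A → List A) (p q : List A × List A) : Prop :=
  ∃ w : List A, w ≠ [] ∧ (q.1 ++ w) <:+ substWord σ p.1 ∧ (q.2 ++ w) <:+ substWord σ p.2

/-- An edge in the graph `G` between the unordered pairs represented by `p` and `q`. -/
def graphEdge (σ : A → List A) (p q : List A × List A) : Prop :=
  edgeRep σ p q ∨ edgeRep σ p q.swap ∨ edgeRep σ p.swap q ∨ edgeRep σ p.swap q.swap

/-- A representative generates a gap of natural 1-cutting points. -/
def genGapRep (σ : A → List A) (p : List A × List A) : Prop :=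
  ∃ (α β : A) (γ δ : List A),
    (σ α <:+ σ β ∧ σ α ≠ σ β) ∧
    List.Forall₂ (fun s t => σ s = σ t) γ δ ∧
    (α :: γ) <:+ substWord σ p.1 ∧ (β :: δ) <:+ substWord σ p.2

/-- The unordered pair represented by `p` generates a gap of natural 1-cutting points. -/
def genGap (σ : A → List A) (p : List A × List A) : Prop :=
  genGapRep σ p ∨ genGapRep σ p.swap

/-- The list of consecutive two-letter blocks of a word. -/
def pairsList (l : List A) : List (List A) :=
  List.zipWith (fun a b => [a, b]) l l.tail

end Defs

section AuxSeg

variable {A : Type*}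

lemma seg_length' (u : ℕ → A) (i j : ℕ) : (seg u i j).length = j - i := by
  simp [seg]

lemma seg_nil' (u : ℕ → A) (n : ℕ) : seg u n n = [] := by
  simp [seg]

lemma seg_single' (u : ℕ → A) (n : ℕ) : seg u n (n + 1) = [u n] := by
  simp [seg, Nat.add_sub_cancel_left, List.range_succ]

lemma seg_append' (u : ℕ → A) {i j l : ℕ} (h1 : i ≤ j) (h2 : j ≤ l) :
    seg u i j ++ seg u j l = seg u i l := by
  apply List.ext_getElem
  · rw [List.length_append, seg_length', seg_length', seg_length']; omega
  · intro n hn1 hn2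
    rw [List.length_append, seg_length', seg_length'] at hn1
    rw [seg_length'] at hn2
    rcases lt_or_ge n (j - i) with hn | hn
    · rw [List.getElem_append_left (by rw [seg_length']; exact hn)]
      simp [seg]
    · rw [List.getElem_append_right (by rw [seg_length']; exact hn)]
      simp only [seg, List.getElem_map, List.getElem_range, List.length_map,
        List.length_range]
      congr 1
      omega

lemma seg_take' (u : ℕ → A) (i L ℓ : ℕ) (h : ℓ ≤ L) :
    (seg u i (i + L)).take ℓ = seg u i (i + ℓ) := by
  simp only [seg, Nat.add_sub_cancel_left]
  rw [← List.map_take, List.take_range, Nat.min_eq_left h]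

lemma substWord_nil (σ : A → List A) : substWord σ [] = [] := rfl

lemma substWord_cons (σ : A → List A) (a : A) (l : List A) :
    substWord σ (a :: l) = σ a ++ substWord σ l := by
  simp [substWord]

lemma substWord_append (σ : A → List A) (l₁ l₂ : List A) :
    substWord σ (l₁ ++ l₂) = substWord σ l₁ ++ substWord σ l₂ := by
  simp [substWord]

lemma substPow_zero (σ : A → List A) (w : List A) : substPow σ 0 w = w := rfl

lemma substPow_succ' (σ : A → List A) (p : ℕ) (w : List A) :
    substPow σ (p + 1) w = substWord σ (substPow σ p w) :=
  Function.iterate_succ_apply' _ _ _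

lemma substPow_nil (σ : A → List A) (p : ℕ) : substPow σ p [] = [] := by
  induction p with
  | zero => rfl
  | succ p ih => rw [substPow_succ', ih]; rfl

lemma substPow_append (σ : A → List A) (p : ℕ) (l₁ l₂ : List A) :
    substPow σ p (l₁ ++ l₂) = substPow σ p l₁ ++ substPow σ p l₂ := by
  induction p with
  | zero => rfl
  | succ p ih => rw [substPow_succ', ih, substWord_append, substPow_succ', substPow_succ']

lemma length_le_substWord {σ : A → List A} (hσne : ∀ a, σ a ≠ []) (l : List A) :
    l.length ≤ (substWord σ l).length := by
  induction l with
  | nil => simp [substWord_nil]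
  | cons a l ih =>
    rw [substWord_cons, List.length_append, List.length_cons]
    have := List.length_pos_iff.mpr (hσne a)
    omega

lemma length_le_substPow {σ : A → List A} (hσne : ∀ a, σ a ≠ []) (p : ℕ) (l : List A) :
    l.length ≤ (substPow σ p l).length := by
  induction p with
  | zero => exact le_rfl
  | succ p ih => rw [substPow_succ']; exact ih.trans (length_le_substWord hσne _)

lemma substPow_fixed {σ : A → List A} {u : ℕ → A} (hfix : IsFixedPoint σ u) (p m : ℕ) :
    substPow σ p (seg u 0 m) = seg u 0 (substPow σ p (seg u 0 m)).length := by
  induction p with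
  | zero =>
    rw [substPow_zero, seg_length']
    simp
  | succ p ih =>
    rw [substPow_succ', ih]
    exact hfix _

end AuxSeg

section AuxWt

variable {A : Type*} [Fintype A] [DecidableEq A]

lemma wt_count (β : A → ℝ) (l : List A) :
    (l.map β).sum = ∑ b, (l.count b : ℝ) * β b := by
  induction l with
  | nil => simp
  | cons a l ih =>
    have hcnt : ∀ b : A, (((a :: l).count b : ℝ)) = (l.count b : ℝ) + if b = a then 1 else 0 := by
      intro b
      by_cases hb : b = a
      · subst hb; simp [List.count_cons_self]
      · simp [List.count_cons_of_ne (Ne.symm hb), hb]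
    simp only [List.map_cons, List.sum_cons, ih, hcnt]
    have h : ∑ b, (((l.count b : ℝ)) + if b = a then 1 else 0) * β b
        = (∑ b, (l.count b : ℝ) * β b) + ∑ b, (if b = a then β b else 0) := by
      rw [← Finset.sum_add_distrib]
      refine Finset.sum_congr rfl fun b _ => by split <;> ring
    rw [h, Finset.sum_ite_eq' Finset.univ a β, if_pos (Finset.mem_univ a)]
    ring

lemma wt_letter {σ : A → List A} {β : A → ℝ} {lam : ℝ}
    (heig : (incMatrixR σ).mulVec β = lam • β) (a : A) :
    ((σ a).map β).sum = lam * β a := by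
  have h := congrFun heig a
  simp only [Matrix.mulVec, dotProduct, incMatrixR, Matrix.of_apply,
    Pi.smul_apply, smul_eq_mul] at h
  rw [wt_count]
  exact h

lemma wt_substWord {σ : A → List A} {β : A → ℝ} {lam : ℝ}
    (heig : (incMatrixR σ).mulVec β = lam • β) (l : List A) :
    ((substWord σ l).map β).sum = lam * (l.map β).sum := by
  induction l with
  | nil => simp [substWord_nil]
  | cons a l ih =>
    rw [substWord_cons, List.map_append, List.sum_append, ih, wt_letter heig,
      List.map_cons, List.sum_cons]
    ring

lemma wt_substPow {σ : A → List A} {β : A → ℝ} {lam : ℝ}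
    (heig : (incMatrixR σ).mulVec β = lam • β) (p : ℕ) (l : List A) :
    ((substPow σ p l).map β).sum = lam ^ p * (l.map β).sum := by
  induction p with
  | zero => simp [substPow_zero]
  | succ p ih =>
    rw [substPow_succ', wt_substWord heig, ih, pow_succ]
    ring

lemma wt_lower [Nonempty A] (β : A → ℝ) (l : List A) :
    (Finset.univ.inf' Finset.univ_nonempty β) * l.length ≤ (l.map β).sum := by
  induction l with
  | nil => simp
  | cons a l ih =>
    simp only [List.map_cons, List.sum_cons, List.length_cons]
    have h := Finset.inf'_le β (Finset.mem_univ a)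
    push_cast
    linarith

lemma wt_upper [Nonempty A] (β : A → ℝ) (l : List A) :
    (l.map β).sum ≤ (Finset.univ.sup' Finset.univ_nonempty β) * l.length := by
  induction l with
  | nil => simp
  | cons a l ih =>
    simp only [List.map_cons, List.sum_cons, List.length_cons]
    have h := Finset.le_sup' β (Finset.mem_univ a)
    push_cast
    linarith

end AuxWt

set_option maxHeartbeats 2000000
/-- Lemma 3.2: if `k ≥ 3C²` and `σ` is not unilaterally recognizable, then for each `p`
there exist `i_p ∈ E₁`, `j_p ∉ E₁`, indices `i'_p, j'_p ≥ 0`, `h_p, ℓ_p ≥ 1` and words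
`α_p, γ'_p ∈ A*`, `γ_p ∈ A⁺` with `u_[i_p,i_p+ℓ_p) = u_[j_p,j_p+ℓ_p)`,
`{α_p, σ^p(u_{i'_p}), …, σ^p(u_{i'_p+k-1})}` a natural `p`-cutting of `u_[i_p,i_p+ℓ_p)`,
and `{γ_p, σ^p(u_{j'_p}), …, σ^p(u_{j'_p+h_p-1}), γ'_p}` a natural `p`-cutting of
`u_[j_p+|α_p|, j_p+ℓ_p)`. -/
theorem stmt_7 (A : Type*) [Fintype A] [DecidableEq A] [Nonempty A]
    (h2 : 2 ≤ Fintype.card A)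
    (σ : A → List A) (hσne : ∀ a, σ a ≠ [])
    (hprim : IsPrimitiveSubst σ)
    (u : ℕ → A) (hfix : IsFixedPoint σ u) (hap : AperiodicSeq u)
    (lam : ℝ) (β : A → ℝ) (hβ : ∀ a, 0 < β a)
    (heig : (incMatrixR σ).mulVec β = lam • β)
    (k : ℕ) (hk : 3 * (Cst β : ℝ) ^ 2 ≤ (k : ℝ))
    (hrec : ¬ UnilaterallyRecognizable σ u) :
    ∀ p : ℕ, 1 ≤ p →
      ∃ (i j i' j' h ℓ : ℕ) (α γ' γ : List A),
        i ∈ cutPoints σ u 1 ∧ j ∉ cutPoints σ u 1 ∧ 1 ≤ h ∧ 1 ≤ ℓ ∧ γ ≠ [] ∧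
        seg u i (i + ℓ) = seg u j (j + ℓ) ∧
        IsNaturalCutting σ u p i ℓ α i' k [] ∧
        IsNaturalCutting σ u p (j + α.length) (ℓ - α.length) γ j' h γ' := by
  intro p hp
  classical
  -- abbreviations
  set S := Sp σ p with hSdef
  set I := Ip σ p with hIdef
  have hSblock : ∀ a : A, (substPow σ p [a]).length ≤ S := fun a =>
    Finset.le_sup' (fun a => (substPow σ p [a]).length) (Finset.mem_univ a)
  have hIblock : ∀ a : A, I ≤ (substPow σ p [a]).length := fun a =>
    Finset.inf'_le (fun a => (substPow σ p [a]).length) (Finset.mem_univ a)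
  have hI1 : 1 ≤ I := by
    refine Finset.le_inf' _ _ fun a _ => ?_
    have := length_le_substPow hσne p [a]
    simpa using this
  -- the numeric inequalities
  have hnum : 2 * S ≤ k * I ∧ 3 ≤ k := by
    set βmax := Finset.univ.sup' Finset.univ_nonempty β with hmax
    set βmin := Finset.univ.inf' Finset.univ_nonempty β with hmin
    have hβmin : 0 < βmin := by
      obtain ⟨a, -, ha⟩ := Finset.exists_mem_eq_inf' Finset.univ_nonempty β
      rw [hmin, ha]; exact hβ a
    have hβmax : 0 < βmax := by
      obtain ⟨a, -, ha⟩ := Finset.exists_mem_eq_sup' Finset.univ_nonempty β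
      rw [hmax, ha]; exact hβ a
    have hC : βmax / βmin ≤ (Cst β : ℝ) := Nat.le_ceil _
    have hC' : βmax ≤ (Cst β : ℝ) * βmin := by
      rw [div_le_iff₀ hβmin] at hC; linarith
    have hCpos : (0:ℝ) ≤ (Cst β : ℝ) := Nat.cast_nonneg _
    have hC1 : (1:ℝ) ≤ (Cst β : ℝ) := by
      have h1 : (1:ℕ) ≤ Cst β := by
        rw [Cst, Nat.one_le_ceil_iff]
        have : Classical.arbitrary A = Classical.arbitrary A := rfl
        have hle : βmin ≤ βmax := by
          have h1 := Finset.inf'_le β (Finset.mem_univ (Classical.arbitrary A))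
          have h2 := Finset.le_sup' β (Finset.mem_univ (Classical.arbitrary A))
          exact le_trans h1 h2
        exact div_pos (lt_of_lt_of_le hβmin hle) hβmin
      exact_mod_cast h1
    have hk3 : 3 ≤ k := by
      have h3 : (3:ℝ) ≤ (k:ℝ) := by nlinarith
      exact_mod_cast h3
    have hlam : 0 < lam := by
      set a := Classical.arbitrary A
      have h1 := wt_letter heig a
      have h2 := wt_lower β (σ a)
      have h3 : 1 ≤ (σ a).length := List.length_pos_iff.mpr (hσne a)
      have h4 : 0 < ((σ a).map β).sum := by
        have : βmin * 1 ≤ βmin * ((σ a).length : ℝ) := by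
          apply mul_le_mul_of_nonneg_left _ hβmin.le
          exact_mod_cast h3
        rw [hmin] at *
        nlinarith
      rw [h1] at h4
      nlinarith [hβ a]
    have hlamp : 0 < lam ^ p := pow_pos hlam p
    constructor
    · -- 2 * S ≤ k * I
      obtain ⟨a, -, haS⟩ := Finset.exists_mem_eq_sup'
        (Finset.univ_nonempty : (Finset.univ : Finset A).Nonempty)
        (fun a => (substPow σ p [a]).length)
      obtain ⟨b, -, hbI⟩ := Finset.exists_mem_eq_inf'
        (Finset.univ_nonempty : (Finset.univ : Finset A).Nonempty)
        (fun a => (substPow σ p [a]).length)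
      have hwa : ((substPow σ p [a]).map β).sum = lam ^ p * β a := by
        rw [wt_substPow heig]; simp
      have hwb : ((substPow σ p [b]).map β).sum = lam ^ p * β b := by
        rw [wt_substPow heig]; simp
      have hla := wt_lower β (substPow σ p [a])
      have hua := wt_upper β (substPow σ p [b])
      rw [hwa] at hla
      rw [hwb] at hua
      have hSa : (S : ℝ) = ((substPow σ p [a]).length : ℝ) := by
        rw [hSdef, Sp, haS]
      have hIb : (I : ℝ) = ((substPow σ p [b]).length : ℝ) := by
        rw [hIdef, Ip, hbI]
      have hβa : β a ≤ βmax := Finset.le_sup' β (Finset.mem_univ a)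
      have hβb : βmin ≤ β b := Finset.inf'_le β (Finset.mem_univ b)
      -- fact1 : S * βmin ≤ lam^p * βmax
      have fact1 : (S : ℝ) * βmin ≤ lam ^ p * βmax := by
        rw [hSa]
        calc ((substPow σ p [a]).length : ℝ) * βmin
            = βmin * ((substPow σ p [a]).length : ℝ) := by ring
          _ ≤ lam ^ p * β a := hla
          _ ≤ lam ^ p * βmax := by nlinarith
      have fact2 : lam ^ p * βmin ≤ (I : ℝ) * βmax := by
        rw [hIb]
        calc lam ^ p * βmin ≤ lam ^ p * β b := by nlinarith
          _ ≤ βmax * ((substPow σ p [b]).length : ℝ) := hua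
          _ = ((substPow σ p [b]).length : ℝ) * βmax := by ring
      have hS2 : (S : ℝ) ≤ (Cst β : ℝ) * lam ^ p := by
        have h1 : lam ^ p * βmax ≤ lam ^ p * ((Cst β : ℝ) * βmin) :=
          mul_le_mul_of_nonneg_left hC' hlamp.le
        have h2 : (S : ℝ) * βmin ≤ ((Cst β : ℝ) * lam ^ p) * βmin := by nlinarith
        exact le_of_mul_le_mul_right h2 hβmin
      have hI2 : lam ^ p ≤ (Cst β : ℝ) * (I : ℝ) := by
        have h1 : (I : ℝ) * βmax ≤ (I : ℝ) * ((Cst β : ℝ) * βmin) :=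
          mul_le_mul_of_nonneg_left hC' (Nat.cast_nonneg I)
        have h2 : lam ^ p * βmin ≤ ((Cst β : ℝ) * (I : ℝ)) * βmin := by nlinarith
        exact le_of_mul_le_mul_right h2 hβmin
      have hfin : (2 * S : ℝ) ≤ (k : ℝ) * (I : ℝ) := by
        nlinarith [mul_le_mul_of_nonneg_left hI2 hCpos,
          mul_nonneg (show (0:ℝ) ≤ (k:ℝ) - 3 * ((Cst β : ℝ))^2 by linarith)
            (Nat.cast_nonneg I),
          mul_nonneg (mul_nonneg hCpos hCpos) (Nat.cast_nonneg I)]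
      exact_mod_cast hfin
    · exact hk3
  obtain ⟨hkI, hk3⟩ := hnum
  have hk1 : 1 ≤ k := by omega
  -- get i, j from non-recognizability
  set L := (k + 1) * S + 1 with hLdef
  obtain ⟨i, j, hsegL, hiE, hjE⟩ :
      ∃ i j, seg u i (i + L) = seg u j (j + L) ∧
        i ∈ cutPoints σ u 1 ∧ j ∉ cutPoints σ u 1 := by
    by_contra hcon
    push_neg at hcon
    exact hrec ⟨L, Nat.succ_le_succ (Nat.zero_le _), fun i j hseg hi => hcon i j hseg hi⟩
  -- the cutting point function
  set c : ℕ → ℕ := fun n => (substPow σ p (seg u 0 n)).length with hcdef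
  have hcn : ∀ n, c n = (substPow σ p (seg u 0 n)).length := fun n => rfl
  have hc : ∀ n, substPow σ p (seg u 0 n) = seg u 0 (c n) := fun n =>
    substPow_fixed hfix p n
  have hdec : ∀ {n m : ℕ}, n ≤ m →
      c n ≤ c m ∧ substPow σ p (seg u n m) = seg u (c n) (c m) := by
    intro n m hnm
    have h1 : substPow σ p (seg u 0 m)
        = substPow σ p (seg u 0 n) ++ substPow σ p (seg u n m) := by
      rw [← substPow_append, seg_append' u (Nat.zero_le n) hnm]
    have hlen : c m = c n + (substPow σ p (seg u n m)).length := by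
      rw [hcn, hcn, h1, List.length_append]
    have hcle : c n ≤ c m := by omega
    refine ⟨hcle, ?_⟩
    have h3 : seg u 0 (c n) ++ seg u (c n) (c m)
        = seg u 0 (c n) ++ substPow σ p (seg u n m) := by
      calc seg u 0 (c n) ++ seg u (c n) (c m) = seg u 0 (c m) :=
            seg_append' u (Nat.zero_le _) hcle
        _ = substPow σ p (seg u 0 m) := (hc m).symm
        _ = substPow σ p (seg u 0 n) ++ substPow σ p (seg u n m) := h1
        _ = seg u 0 (c n) ++ substPow σ p (seg u n m) := by rw [hc n]
    exact (List.append_cancel_left h3).symm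
  have hcmono : ∀ {n m : ℕ}, n ≤ m → c n ≤ c m := fun h => (hdec h).1
  have hsub : ∀ {n m : ℕ}, n ≤ m → substPow σ p (seg u n m) = seg u (c n) (c m) :=
    fun h => (hdec h).2
  have hblock : ∀ n, substPow σ p [u n] = seg u (c n) (c (n + 1)) := by
    intro n
    rw [← seg_single' u n]
    exact hsub (Nat.le_succ n)
  have hcsucc : ∀ n, c (n + 1) = c n + (substPow σ p [u n]).length := by
    intro n
    have h1 := hblock n
    have h2 : (substPow σ p [u n]).length = c (n + 1) - c n := by
      rw [h1, seg_length']
    have h3 : c n ≤ c (n + 1) := hcmono (Nat.le_succ n)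
    omega
  have hcup : ∀ n, c (n + 1) ≤ c n + S := by
    intro n; have := hSblock (u n); rw [hcsucc]; omega
  have hclow : ∀ n, c n + I ≤ c (n + 1) := by
    intro n; have := hIblock (u n); rw [hcsucc]; omega
  have hcS : ∀ n q : ℕ, c (n + q) ≤ c n + q * S := by
    intro n q
    induction q with
    | zero => simp
    | succ q ih =>
      have h1 : c (n + q + 1) ≤ c (n + q) + S := hcup (n + q)
      have h2 : (q + 1) * S = q * S + S := by ring
      show c (n + q + 1) ≤ c n + (q + 1) * S
      omega
  have hcI : ∀ n q : ℕ, c n + q * I ≤ c (n + q) := by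
    intro n q
    induction q with
    | zero => simp
    | succ q ih =>
      have h1 : c (n + q) + I ≤ c (n + q + 1) := hclow (n + q)
      have h2 : (q + 1) * I = q * I + I := by ring
      show c n + (q + 1) * I ≤ c (n + q + 1)
      omega
  have hcge : ∀ n, n ≤ c n := by
    intro n
    have h1 := length_le_substPow hσne p (seg u 0 n)
    rw [seg_length'] at h1
    rw [hcn]
    omega
  have hc0 : c 0 = 0 := by
    rw [hcn, seg_nil', substPow_nil]
    rfl
  -- choose i'
  have hex1 : ∃ n, i ≤ c n := ⟨i, hcge i⟩
  set i' := Nat.find hex1 with hi'def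
  have hi'spec : i ≤ c i' := Nat.find_spec hex1
  have hi'min : ∀ n, n < i' → c n < i := by
    intro n hn
    have := Nat.find_min hex1 hn
    omega
  -- α and ℓ
  set α : List A := seg u i (c i') with hαdef
  have hαlen : α.length = c i' - i := by rw [hαdef, seg_length']
  set ℓ := c (i' + k) - i with hℓdef
  have hii'k : c i' ≤ c (i' + k) := hcmono (Nat.le_add_right i' k)
  have hiℓ : i + ℓ = c (i' + k) := by omega
  have hkle : k ≤ k * I := Nat.le_mul_of_pos_right k hI1
  have hcIik := hcI i' k
  have hℓpos : 1 ≤ ℓ := by omega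
  have hαℓ : α.length ≤ ℓ := by omega
  have hℓα : ℓ - α.length = c (i' + k) - c i' := by omega
  -- ℓ ≤ L
  have hℓL : ℓ ≤ L := by
    have hMul : k * S ≤ (k + 1) * S := Nat.mul_le_mul_right S (Nat.le_succ k)
    rcases Nat.eq_zero_or_pos i' with h0 | h0
    · have h1 := hcS 0 k
      have h2 : c (i' + k) = c (0 + k) := by rw [h0]
      have h3 : i ≤ c 0 := by rw [← h0]; exact hi'spec
      omega
    · have e : i' - 1 + (k + 1) = i' + k := by omega
      have f1 : c (i' + k) ≤ c (i' - 1) + (k + 1) * S := by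
        have := hcS (i' - 1) (k + 1); rwa [e] at this
      have f2 : c (i' - 1) < i := hi'min _ (by omega)
      omega
  have hsegshort : seg u i (i + ℓ) = seg u j (j + ℓ) := by
    rw [← seg_take' u i L ℓ hℓL, ← seg_take' u j L ℓ hℓL, hsegL]
  -- choose j'
  set m := j + α.length with hmdef
  have hex2 : ∃ n, m < c n := ⟨m + 1, lt_of_lt_of_le (Nat.lt_succ_self m) (hcge (m + 1))⟩
  set j' := Nat.find hex2 with hj'def
  have hj'spec : m < c j' := Nat.find_spec hex2
  have hj'pos : 0 < j' := by
    rcases Nat.eq_zero_or_pos j' with h0 | h0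
    · rw [h0, hc0] at hj'spec; omega
    · exact h0
  have hj'min : c (j' - 1) ≤ m := by
    have := Nat.find_min hex2 (show j' - 1 < j' by omega)
    omega
  set γ : List A := seg u m (c j') with hγdef
  have hγlen : γ.length = c j' - m := by rw [hγdef, seg_length']
  have hγne : γ ≠ [] := by
    apply List.ne_nil_of_length_pos
    omega
  -- key inequality : c (j' + 1) ≤ j + ℓ
  have ej' : j' - 1 + 1 = j' := by omega
  have hbig : c (j' + 1) ≤ j + ℓ := by
    have g1 : c j' ≤ c (j' - 1) + S := by
      have := hcup (j' - 1); rwa [ej'] at this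
    have g2 : c (j' + 1) ≤ c j' + S := hcup j'
    omega
  -- choose h
  have hex3 : ∃ n, j + ℓ < c (j' + n + 1) := by
    refine ⟨j + ℓ, ?_⟩
    have := hcge (j' + (j + ℓ) + 1)
    omega
  set h := Nat.find hex3 with hhdef
  have hhspec : j + ℓ < c (j' + h + 1) := Nat.find_spec hex3
  have hh1 : 1 ≤ h := by
    rcases Nat.eq_zero_or_pos h with h0 | h0
    · exfalso
      have hx : j + ℓ < c (j' + 1) := by
        have hy := hhspec
        rw [h0] at hy
        simpa using hy
      omega
    · exact h0
  have hhle : c (j' + h) ≤ j + ℓ := by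
    have h1 := Nat.find_min hex3 (show h - 1 < h by omega)
    have e3 : j' + (h - 1) + 1 = j' + h := by omega
    rw [e3] at h1
    omega
  set γ' : List A := seg u (c (j' + h)) (j + ℓ) with hγ'def
  -- assemble
  refine ⟨i, j, i', j', h, ℓ, α, γ', γ, hiE, hjE, hh1, hℓpos, hγne, hsegshort, ?_, ?_⟩
  · -- first cutting
    refine ⟨hk1, ?_, List.nil_prefix, ?_, ?_⟩
    · -- α suffix of σ^p (u (i'-1))
      rcases Nat.eq_zero_or_pos i' with h0 | h0
      · have hi0 : i = 0 := by
          rw [h0] at hi'spec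
          omega
        have : α = [] := by
          apply List.eq_nil_of_length_eq_zero
          rw [hαlen, h0, hc0, hi0]
        rw [this]
        exact List.nil_suffix
      · have e : i' - 1 + 1 = i' := by omega
        have hbl : substPow σ p [u (i' - 1)] = seg u (c (i' - 1)) (c i') := by
          have := hblock (i' - 1); rwa [e] at this
        rw [hbl, hαdef]
        exact ⟨seg u (c (i' - 1)) i,
          seg_append' u (le_of_lt (hi'min _ (by omega))) hi'spec⟩
    · -- decomposition
      rw [List.append_nil, hiℓ, hsub (Nat.le_add_right i' k), hαdef]
      exact (seg_append' u hi'spec hii'k).symm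
    · -- position
      rw [← hcn i']
      omega
  · -- second cutting
    refine ⟨hh1, ?_, ?_, ?_, ?_⟩
    · -- γ suffix of σ^p (u (j'-1))
      have hbl : substPow σ p [u (j' - 1)] = seg u (c (j' - 1)) (c j') := by
        have := hblock (j' - 1); rwa [ej'] at this
      rw [hbl, hγdef]
      exact ⟨seg u (c (j' - 1)) m, seg_append' u hj'min (le_of_lt hj'spec)⟩
    · -- γ' prefix of σ^p (u (j'+h))
      rw [hblock (j' + h), hγ'def]
      exact ⟨seg u (j + ℓ) (c (j' + h + 1)),
        seg_append' u hhle (le_of_lt hhspec)⟩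
    · -- decomposition
      have hm : m + (ℓ - α.length) = j + ℓ := by omega
      rw [hm, hsub (Nat.le_add_right j' h), hγdef, hγ'def]
      have hmh : m ≤ c (j' + h) := le_trans (le_of_lt hj'spec) (hcmono (Nat.le_add_right j' h))
      rw [seg_append' u (le_of_lt hj'spec) (hcmono (Nat.le_add_right j' h))]
      exact (seg_append' u hmh hhle).symm
    · -- position
      rw [← hcn j']
      omega
end

section
/- Let n₀ = (#A)² − 2(#A) + 2. For every letter a ∈ A and every integer n ≥ 2n₀, ‖ comp(σⁿ(a))/|σⁿ(a)| − α/‖α‖₁ ‖₁ ≤ exp( max_{b∈A} d(e_b M_σ^{n₀}, α) )^{ τ_B(M_σ^{n₀})^{⌊n/n₀⌋ − 1} } − 1, and this bound monotonically decreases to zero as n increases. -/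
open List Filter

section Walks
set_option linter.unusedSectionVars false
variable {A : Type*} [Fintype A] [DecidableEq A] {R : A → A → Prop}

set_option linter.unusedSectionVars false
variable {A : Type*} [Fintype A] [DecidableEq A] {R : A → A → Prop}

/-- `f` is a walk of length `m` from `a` to `b` in the relation `R`. -/
def IsWalkF (R : A → A → Prop) (f : ℕ → A) (m : ℕ) (a b : A) : Prop :=
  f 0 = a ∧ f m = b ∧ ∀ i < m, R (f i) (f (i + 1))

/-- There is a walk of length `m` from `a` to `b`. -/
def HasWalk (R : A → A → Prop) (m : ℕ) (a b : A) : Prop := ∃ f, IsWalkF R f m a b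

lemma hasWalk_zero (R : A → A → Prop) (a : A) : HasWalk R 0 a a :=
  ⟨fun _ => a, rfl, rfl, fun i h => absurd h (Nat.not_lt_zero i)⟩

lemma hasWalk_one {a b : A} (h : R a b) : HasWalk R 1 a b := by
  refine ⟨fun i => if i = 0 then a else b, by simp, by simp, ?_⟩
  intro i hi
  interval_cases i
  simpa using h

lemma HasWalk.trans {m m' : ℕ} {a b c : A} (h : HasWalk R m a b) (h' : HasWalk R m' b c) :
    HasWalk R (m + m') a c := by
  obtain ⟨f, hf0, hfm, hf⟩ := h
  obtain ⟨g, hg0, hgm, hg⟩ := h'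
  refine ⟨fun i => if i < m then f i else g (i - m), ?_, ?_, ?_⟩
  · by_cases h0 : 0 < m
    · simpa [h0] using hf0
    · have hm : m = 0 := by omega
      simp [hm] at hfm ⊢
      rw [hg0, ← hfm, hf0]
  · have : ¬ (m + m' < m) := by omega
    simp [this, hg0, hgm]
  · intro i hi
    by_cases h1 : i + 1 < m
    · have h2 : i < m := by omega
      simpa [h1, h2] using hf i h2
    · by_cases h2 : i < m
      · -- i + 1 = m
        have h3 : i + 1 = m := by omega
        show R (if i < m then f i else g (i - m)) (if i + 1 < m then f (i+1) else g (i + 1 - m))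
        rw [if_pos h2, if_neg h1]
        have h4 : i + 1 - m = 0 := by omega
        rw [h4, hg0, ← hfm, ← h3]
        exact hf i h2
      · have h3 : ¬ (i + 1 < m) := h1
        have h4 : i + 1 - m = (i - m) + 1 := by omega
        simp only [if_neg h2, if_neg h3, h4]
        exact hg (i - m) (by omega)

/-- Subwalk from index `i` to index `j`. -/
lemma IsWalkF.sub {f : ℕ → A} {m : ℕ} {a b : A} (h : IsWalkF R f m a b) {i j : ℕ}
    (hij : i ≤ j) (hjm : j ≤ m) : HasWalk R (j - i) (f i) (f j) := by
  refine ⟨fun k => f (i + k), by simp, by show f (i + (j - i)) = f j; rw [Nat.add_sub_cancel' hij], ?_⟩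
  intro k hk
  have := h.2.2 (i + k) (by omega)
  simpa [Nat.add_assoc] using this

/-- Excising the part of a walk between a repeated vertex. -/
lemma IsWalkF.excise {f : ℕ → A} {m : ℕ} {a b : A} (h : IsWalkF R f m a b) {i j : ℕ}
    (hij : i < j) (hjm : j ≤ m) (heq : f i = f j) : HasWalk R (m - (j - i)) a b := by
  obtain ⟨hf0, hfm, hf⟩ := h
  refine ⟨fun k => if k ≤ i then f k else f (k + (j - i)), by simpa using hf0, ?_, ?_⟩
  · by_cases h1 : m - (j - i) ≤ i
    · -- then m = j and m - (j-i) = i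
      have h3 : m - (j - i) = i := by omega
      show (if m - (j - i) ≤ i then f (m - (j-i)) else f (m - (j-i) + (j-i))) = b
      rw [if_pos h1, h3, heq]
      have h2 : j = m := by omega
      rw [h2, hfm]
    · have h4 : m - (j - i) + (j - i) = m := by omega
      simp [h1, h4, hfm]
  · intro k hk
    by_cases h1 : k + 1 ≤ i
    · simp only [if_pos h1, if_pos (by omega : k ≤ i)]
      exact hf k (by omega)
    · by_cases h2 : k ≤ i
      · -- k = i
        have h3 : k = i := by omega
        simp only [if_pos h2, if_neg h1]
        rw [h3, heq]
        have h5 : i + 1 + (j - i) = j + 1 := by omega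
        rw [h5]
        exact hf j (by omega)
      · simp only [if_neg h1, if_neg h2]
        have h5 : k + 1 + (j - i) = (k + (j - i)) + 1 := by omega
        rw [h5]
        exact hf _ (by omega)

/-- In a long walk there is a repeated vertex among the first `card A + 1` vertices;
excise it: we get a closed walk of length `ℓ ∈ [1, card A]` and a walk from `a` to `b`
of length `m - ℓ`. -/
lemma HasWalk.excise_long {m : ℕ} {a b : A} (hm : Fintype.card A ≤ m) (h : HasWalk R m a b) :
    ∃ ℓ x, 1 ≤ ℓ ∧ ℓ ≤ Fintype.card A ∧ HasWalk R ℓ x x ∧ HasWalk R (m - ℓ) a b := by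
  obtain ⟨f, hw⟩ := h
  have hcard : Fintype.card A < Fintype.card (Fin (Fintype.card A + 1)) := by simp
  obtain ⟨i, j, hne, heq⟩ := Fintype.exists_ne_map_eq_of_card_lt
    (fun i : Fin (Fintype.card A + 1) => f i) (by simpa using hcard)
  have hi : (i : ℕ) < Fintype.card A + 1 := i.isLt
  have hj : (j : ℕ) < Fintype.card A + 1 := j.isLt
  -- wlog i < j
  rcases Ne.lt_or_gt hne with hij | hij
  · have hij' : (i : ℕ) < (j : ℕ) := by exact_mod_cast hij
    refine ⟨j - i, f i, by omega, by omega, ?_, hw.excise hij' (by omega) heq⟩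
    have := hw.sub (i := (i : ℕ)) (j := (j : ℕ)) (by omega) (by omega)
    rwa [← heq] at this
  · have hij' : (j : ℕ) < (i : ℕ) := by exact_mod_cast hij
    refine ⟨i - j, f j, by omega, by omega, ?_, hw.excise hij' (by omega) heq.symm⟩
    have := hw.sub (i := (j : ℕ)) (j := (i : ℕ)) (by omega) (by omega)
    rwa [heq] at this

/-- Any walk can be shortened to one of length `< card A` with the same endpoints. -/
lemma HasWalk.shorten {m : ℕ} {a b : A} (h : HasWalk R m a b) :
    ∃ m' < Fintype.card A, HasWalk R m' a b := by
  induction m using Nat.strong_induction_on with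
  | _ m ih =>
    by_cases hm : m < Fintype.card A
    · exact ⟨m, hm, h⟩
    · obtain ⟨ℓ, x, hℓ1, hℓ2, _, h'⟩ := h.excise_long (by omega)
      exact ih (m - ℓ) (by omega) h'


lemma hasWalk_pad_one (hout : ∀ a : A, ∃ b, R a b) {m : ℕ} (h : ∀ a b : A, HasWalk R m a b) :
    ∀ a b : A, HasWalk R (m + 1) a b := by
  intro a b
  obtain ⟨c, hc⟩ := hout a
  have := (hasWalk_one hc).trans (h c b)
  rwa [Nat.add_comm] at this

lemma hasWalk_pad (hout : ∀ a : A, ∃ b, R a b) {m : ℕ} (h : ∀ a b : A, HasWalk R m a b) :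
    ∀ m', m ≤ m' → ∀ a b : A, HasWalk R m' a b :=
  Nat.le_induction h (fun _ _ ih => hasWalk_pad_one hout ih)

/-- Wielandt's theorem, relational form. -/
theorem wielandt_hasWalk (hcard : 2 ≤ Fintype.card A) (hout : ∀ a : A, ∃ b, R a b)
    (hk : ∃ k, ∀ a b : A, HasWalk R k a b) :
    ∀ a b : A, HasWalk R (Fintype.card A ^ 2 - 2 * Fintype.card A + 2) a b := by
  classical
  have hA : Nonempty A := Fintype.card_pos_iff.mp (by omega : 0 < Fintype.card A)
  set n := Fintype.card A with hn
  obtain ⟨k, hkall⟩ := hk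
  obtain ⟨a₀, b₀, hab⟩ := Fintype.exists_pair_of_one_lt_card (α := A) (by omega)
  have hk1 : 1 ≤ k := by
    by_contra hk0
    have hk0' : k = 0 := by omega
    obtain ⟨f, h0, hm, _⟩ := hkall a₀ b₀
    rw [hk0'] at hm
    exact hab (h0 ▸ hm ▸ rfl)
  have hall : ∀ m', k ≤ m' → ∀ a b : A, HasWalk R m' a b := hasWalk_pad hout hkall
  -- the set of closed-walk lengths
  set S : Set ℕ := {m | 1 ≤ m ∧ ∃ a, HasWalk R m a a} with hS
  have hSne : S.Nonempty := ⟨k, hk1, a₀, hkall a₀ a₀⟩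
  set s := sInf S with hs_def
  have hs_mem : s ∈ S := Nat.sInf_mem hSne
  obtain ⟨hs1, ac, f, hf⟩ := hs_mem
  have hsn : s ≤ n := by
    by_contra hgt
    obtain ⟨ℓ, x, hl1, hl2, hloop, _⟩ := HasWalk.excise_long (by omega) ⟨f, hf⟩
    have hmem : ℓ ∈ S := ⟨hl1, x, hloop⟩
    exact absurd (Nat.sInf_le hmem) (by omega)
  -- s ≠ n
  have hsne : s ≠ n := by
    intro hseq
    have hdvd : ∀ m, 1 ≤ m → ∀ a, HasWalk R m a a → n ∣ m := by
      intro m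
      induction m using Nat.strong_induction_on with
      | _ m ih =>
        intro hm1 a hw
        by_cases hmn : m ≤ n
        · have hmem : m ∈ S := ⟨hm1, a, hw⟩
          have hsm : s ≤ m := Nat.sInf_le hmem
          have : m = n := by omega
          exact this ▸ dvd_refl n
        · obtain ⟨ℓ, x, hl1, hl2, hloop, hrest⟩ := hw.excise_long (by omega)
          have hmem : ℓ ∈ S := ⟨hl1, x, hloop⟩
          have hsl : s ≤ ℓ := Nat.sInf_le hmem
          have hln : ℓ = n := by omega
          obtain ⟨c, hc⟩ := ih (m - ℓ) (by omega) (by omega) a hrest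
          refine ⟨c + 1, ?_⟩
          rw [Nat.mul_succ, ← hc]
          omega
    have hd1 := hdvd k hk1 a₀ (hkall a₀ a₀)
    have hd2 := hdvd (k + 1) (by omega) a₀ (hall (k + 1) (by omega) a₀ a₀)
    have hone : n ∣ 1 := by simpa using Nat.dvd_sub hd2 hd1
    have := Nat.le_of_dvd one_pos hone
    omega
  have hsn1 : s ≤ n - 1 := by omega
  -- injectivity of f on [0, s)
  have hinj : ∀ i j, i < s → j < s → f i = f j → i = j := by
    intro i j hi hj heq
    by_contra hne
    rcases Nat.lt_or_ge i j with hij | hij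
    · have := hf.sub (i := i) (j := j) (by omega) (by omega)
      rw [← heq] at this
      have hmem : j - i ∈ S := ⟨by omega, f i, this⟩
      exact absurd (Nat.sInf_le hmem) (by omega)
    · have hji : j < i := by omega
      have := hf.sub (i := j) (j := i) (by omega) (by omega)
      rw [heq] at this
      have hmem : i - j ∈ S := ⟨by omega, f j, this⟩
      exact absurd (Nat.sInf_le hmem) (by omega)
  set C : Finset A := (Finset.range s).image f with hC
  have hCcard : C.card = s := by
    rw [hC, Finset.card_image_of_injOn, Finset.card_range]
    intro i hi j hj heq
    exact hinj i j (Finset.mem_range.mp hi) (Finset.mem_range.mp hj) heq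
  -- the periodic extension of the cycle
  set cyc : ℕ → A := fun i => f (i % s) with hcyc
  have hcyc_edge : ∀ i, R (cyc i) (cyc (i + 1)) := by
    intro i
    have hr : i % s < s := Nat.mod_lt _ (by omega)
    have h1 : (i % s + 1) % s = (i + 1) % s := Nat.mod_add_mod i s 1
    show R (f (i % s)) (f ((i + 1) % s))
    rw [← h1]
    by_cases hcase : i % s + 1 = s
    · have h2 := hf.2.2 (i % s) hr
      rw [hcase] at h2
      rw [hcase, Nat.mod_self, hf.1, ← hf.2.1]
      exact h2
    · have hlt : i % s + 1 < s := by omega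
      rw [Nat.mod_eq_of_lt hlt]
      exact hf.2.2 _ hr
  have hcyc_walk : ∀ i t, HasWalk R t (cyc i) (cyc (i + t)) := by
    intro i t
    refine ⟨fun kk => cyc (i + kk), rfl, rfl, fun kk _ => ?_⟩
    show R (cyc (i + kk)) (cyc (i + (kk + 1)))
    rw [← Nat.add_assoc]
    exact hcyc_edge (i + kk)
  have hcyc_eq : ∀ r, r < s → cyc r = f r := by
    intro r hr
    show f (r % s) = f r
    rw [Nat.mod_eq_of_lt hr]
  -- Piece 1 : reach the cycle in exactly n - s steps
  have piece1 : ∀ u : A, ∃ r, r < s ∧ HasWalk R (n - s) u (f r) := by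
    intro u
    set T : Set ℕ := {m | ∃ r, r < s ∧ HasWalk R m u (f r)} with hT
    have hTne : T.Nonempty := ⟨k, 0, by omega, hkall u (f 0)⟩
    set t := sInf T with ht_def
    have htmem : t ∈ T := Nat.sInf_mem hTne
    obtain ⟨r0, hr0, g, hg⟩ := htmem
    have hnotC : ∀ i, i < t → ∀ r, r < s → g i ≠ f r := by
      intro i hi r hr heq
      have hsub := hg.sub (i := 0) (j := i) (by omega) (by omega)
      rw [hg.1, heq] at hsub
      have : i ∈ T := ⟨r, hr, by simpa using hsub⟩
      exact absurd (Nat.sInf_le this) (by omega)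
    have hginj : ∀ i j, i < j → j ≤ t → g i ≠ g j := by
      intro i j hij hjt heq
      have hex := hg.excise hij hjt heq
      have hmem : t - (j - i) ∈ T := ⟨r0, hr0, hex⟩
      exact absurd (Nat.sInf_le hmem) (by omega)
    have htle : t + s ≤ n := by
      have hD : ((Finset.range t).image g).card = t := by
        rw [Finset.card_image_of_injOn, Finset.card_range]
        intro i hi j hj heq
        simp only [Finset.coe_range, Set.mem_Iio] at hi hj
        by_contra hne
        rcases Nat.lt_or_ge i j with h | h
        · exact hginj i j h (by omega) heq
        · exact hginj j i (by omega) (by omega) heq.symm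
      have hdisj : Disjoint ((Finset.range t).image g) C := by
        rw [Finset.disjoint_left]
        rintro x hx hxC
        obtain ⟨i, hi, rfl⟩ := Finset.mem_image.mp hx
        obtain ⟨r, hr, heq⟩ := Finset.mem_image.mp hxC
        exact hnotC i (Finset.mem_range.mp hi) r (Finset.mem_range.mp hr) heq.symm
      have hcup := Finset.card_union_of_disjoint hdisj
      have hle := Finset.card_le_univ (((Finset.range t).image g) ∪ C)
      rw [hcup, hD, hCcard] at hle
      exact hle
    have w2 := hcyc_walk r0 (n - s - t)
    rw [hcyc_eq r0 hr0] at w2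
    refine ⟨(r0 + (n - s - t)) % s, Nat.mod_lt _ (by omega), ?_⟩
    have hw := HasWalk.trans ⟨g, hg⟩ w2
    have harith : t + (n - s - t) = n - s := by omega
    rw [harith] at hw
    exact hw
  -- Piece 2 : from the cycle to anywhere in exactly s * (n-1) steps
  set Rs : A → A → Prop := fun x y => HasWalk R s x y with hRs
  have hblock : ∀ (d : ℕ) (x y : A), HasWalk R (s * d) x y → HasWalk Rs d x y := by
    rintro d x y ⟨f', hf'⟩
    refine ⟨fun i => f' (s * i), by simpa using hf'.1, by exact hf'.2.1, ?_⟩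
    intro i hi
    have hle1 : s * i ≤ s * (i + 1) := Nat.mul_le_mul_left s (by omega)
    have hle2 : s * (i + 1) ≤ s * d := Nat.mul_le_mul_left s (by omega)
    have hsub := hf'.sub hle1 hle2
    have hmul : s * (i + 1) = s * i + s := Nat.mul_succ s i
    rw [hmul, Nat.add_sub_cancel_left] at hsub
    exact hsub
  have hunblock : ∀ (d : ℕ) (x y : A), HasWalk Rs d x y → HasWalk R (s * d) x y := by
    intro d
    induction d with
    | zero =>
      rintro x y ⟨f', h0, hm, _⟩
      rw [Nat.mul_zero]
      rw [← h0, hm]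
      exact hasWalk_zero R y
    | succ d ih =>
      rintro x y ⟨f', hf'⟩
      have w1 : HasWalk Rs d x (f' d) := ⟨f', hf'.1, rfl, fun i hi => hf'.2.2 i (by omega)⟩
      have e : Rs (f' d) y := by
        have := hf'.2.2 d (by omega)
        rwa [hf'.2.1] at this
      have := (ih x (f' d) w1).trans e
      rwa [← Nat.mul_succ] at this
  have hloopB : ∀ r, r < s → Rs (f r) (f r) := by
    intro r hr
    have hw := hcyc_walk r s
    rw [hcyc_eq r hr] at hw
    have he : (r + s) % s = r := by
      rw [Nat.add_mod_right, Nat.mod_eq_of_lt hr]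
    show HasWalk R s (f r) (f r)
    have : cyc (r + s) = f r := by rw [hcyc]; show f ((r + s) % s) = f r; rw [he]
    rwa [this] at hw
  have piece2 : ∀ r, r < s → ∀ j : A, HasWalk R (s * (n - 1)) (f r) j := by
    intro r hr j
    have hbig : HasWalk Rs k (f r) j := by
      refine hblock k _ _ (hall (s * k) ?_ _ _)
      calc k = 1 * k := (Nat.one_mul k).symm
        _ ≤ s * k := Nat.mul_le_mul_right k hs1
    obtain ⟨d, hd, hw⟩ := hbig.shorten
    have hloopW : HasWalk Rs (n - 1 - d) (f r) (f r) :=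
      ⟨fun _ => f r, rfl, rfl, fun i _ => hloopB r hr⟩
    have hcomb := hloopW.trans hw
    have harith : (n - 1 - d) + d = n - 1 := by omega
    rw [harith] at hcomb
    exact hunblock _ _ _ hcomb
  -- combine
  have hallL : ∀ a b : A, HasWalk R ((n - s) + s * (n - 1)) a b := by
    intro a b
    obtain ⟨r, hr, w1⟩ := piece1 a
    exact w1.trans (piece2 r hr b)
  -- length bound
  have hle : (n - s) + s * (n - 1) ≤ n ^ 2 - 2 * n + 2 := by
    set m2 := n - 2 with hm2
    have hn2 : n = m2 + 2 := by omega
    have hs' : s ≤ m2 + 1 := by omega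
    have h1 : s * m2 ≤ (m2 + 1) * m2 := Nat.mul_le_mul_right m2 hs'
    have e5 : (m2 + 1) * m2 = m2 * m2 + m2 := by ring
    rw [e5] at h1
    have e3 : n - 1 = m2 + 1 := by omega
    rw [e3, hn2]
    have e2 : (m2 + 2) ^ 2 = m2 * m2 + 4 * m2 + 4 := by ring
    have e4 : s * (m2 + 1) = s * m2 + s := by ring
    rw [e2, e4]
    generalize m2 * m2 = X at h1 ⊢
    generalize s * m2 = Y at h1 ⊢
    omega
  exact hasWalk_pad hout hallL _ hle

end Walks

section MatrixWalk
set_option linter.unusedSectionVars false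
variable {A : Type*} [Fintype A] [DecidableEq A] {R : A → A → Prop}

lemma hasWalk_succ_iff {m : ℕ} {a b : A} :
    HasWalk R (m + 1) a b ↔ ∃ c, HasWalk R m a c ∧ R c b := by
  constructor
  · rintro ⟨f, h0, hm, hc⟩
    refine ⟨f m, ⟨f, h0, rfl, fun i hi => hc i (by omega)⟩, ?_⟩
    have := hc m (by omega)
    rwa [hm] at this
  · rintro ⟨c, hw, hR⟩
    exact hw.trans (hasWalk_one hR)

lemma entry_pow_nonneg {M : Matrix A A ℝ} (hM : ∀ a b, 0 ≤ M a b) (m : ℕ) :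
    ∀ a b, 0 ≤ (M ^ m) a b := by
  induction m with
  | zero =>
    intro a b
    rw [pow_zero]
    by_cases h : a = b <;> simp [Matrix.one_apply, h]
  | succ m ih =>
    intro a b
    rw [pow_succ, Matrix.mul_apply]
    exact Finset.sum_nonneg fun c _ => mul_nonneg (ih a c) (hM c b)

lemma mul_entry_pos_iff {M N : Matrix A A ℝ} (hM : ∀ a b, 0 ≤ M a b) (hN : ∀ a b, 0 ≤ N a b)
    (a b : A) : 0 < (M * N) a b ↔ ∃ c, 0 < M a c ∧ 0 < N c b := by
  rw [Matrix.mul_apply]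
  constructor
  · intro h
    by_contra hx
    push_neg at hx
    have hz : ∀ c ∈ Finset.univ, M a c * N c b = 0 := by
      intro c _
      rcases (hM a c).eq_or_lt with h1 | h1
      · rw [← h1, zero_mul]
      · have h2 : N c b = 0 := le_antisymm (hx c h1) (hN c b)
        rw [h2, mul_zero]
    rw [Finset.sum_eq_zero hz] at h
    exact lt_irrefl 0 h
  · rintro ⟨c, h1, h2⟩
    exact Finset.sum_pos' (fun i _ => mul_nonneg (hM a i) (hN i b))
      ⟨c, Finset.mem_univ c, mul_pos h1 h2⟩

lemma hasWalk_iff_pow_pos {M : Matrix A A ℝ} (hM : ∀ a b, 0 ≤ M a b) (m : ℕ) (a b : A) :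
    HasWalk (fun x y => 0 < M x y) m a b ↔ 0 < (M ^ m) a b := by
  induction m generalizing b with
  | zero =>
    constructor
    · rintro ⟨f, h0, hm, -⟩
      have : a = b := by rw [← h0, hm]
      subst this
      simp [Matrix.one_apply]
    · intro h
      by_cases hab : a = b
      · subst hab; exact hasWalk_zero _ a
      · rw [pow_zero] at h
        simp [Matrix.one_apply, hab] at h
  | succ m ih =>
    rw [hasWalk_succ_iff, pow_succ, mul_entry_pos_iff (entry_pow_nonneg hM m) hM]
    constructor
    · rintro ⟨c, hw, hR⟩
      exact ⟨c, (ih c).mp hw, hR⟩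
    · rintro ⟨c, h1, h2⟩
      exact ⟨c, (ih c).mpr h1, h2⟩


end MatrixWalk

section BirkhoffPart
set_option linter.unusedSectionVars false
set_option maxHeartbeats 1000000
variable {A : Type*} [Fintype A] [Nonempty A] [DecidableEq A]

/-- `φ(N)`, the minimal cross-ratio of entries of `N`. -/
noncomputable def phiC (N : Matrix A A ℝ) : ℝ :=
  Finset.univ.inf' Finset.univ_nonempty fun q : (A × A) × A × A =>
    N q.1.1 q.2.1 * N q.1.2 q.2.2 / (N q.1.2 q.2.1 * N q.1.1 q.2.2)

lemma phiC_pos {N : Matrix A A ℝ} (hN : ∀ a b, 0 < N a b) : 0 < phiC N := by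
  rw [phiC, Finset.lt_inf'_iff]
  intro q _
  exact div_pos (mul_pos (hN _ _) (hN _ _)) (mul_pos (hN _ _) (hN _ _))

lemma phiC_le_one {N : Matrix A A ℝ} (hN : ∀ a b, 0 < N a b) : phiC N ≤ 1 := by
  have a0 : A := Classical.arbitrary A
  have h := Finset.inf'_le (b := ((a0, a0), (a0, a0)))
    (fun q : (A × A) × A × A =>
      N q.1.1 q.2.1 * N q.1.2 q.2.2 / (N q.1.2 q.2.1 * N q.1.1 q.2.2)) (Finset.mem_univ _)
  rw [div_self (mul_pos (hN a0 a0) (hN a0 a0)).ne'] at h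
  exact h

lemma phiC_le {N : Matrix A A ℝ} (hN : ∀ a b, 0 < N a b) (a a' b b' : A) :
    phiC N * (N a' b * N a b') ≤ N a b * N a' b' := by
  have h := Finset.inf'_le (b := ((a, a'), (b, b')))
    (fun q : (A × A) × A × A =>
      N q.1.1 q.2.1 * N q.1.2 q.2.2 / (N q.1.2 q.2.1 * N q.1.1 q.2.2)) (Finset.mem_univ _)
  have hpos : 0 < N a' b * N a b' := mul_pos (hN _ _) (hN _ _)
  calc phiC N * (N a' b * N a b')
      ≤ N a b * N a' b' / (N a' b * N a b') * (N a' b * N a b') :=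
        mul_le_mul_of_nonneg_right h hpos.le
    _ = N a b * N a' b' := div_mul_cancel₀ _ hpos.ne'

lemma vecMul_entry (x : A → ℝ) (N : Matrix A A ℝ) (b : A) :
    Matrix.vecMul x N b = ∑ a, x a * N a b := by
  simp [Matrix.vecMul, dotProduct]

lemma vecMul_pos {N : Matrix A A ℝ} (hN : ∀ a b, 0 < N a b) {x : A → ℝ}
    (hx : ∀ a, 0 ≤ x a) (hx0 : ∃ a, 0 < x a) (b : A) : 0 < Matrix.vecMul x N b := by
  rw [vecMul_entry]
  obtain ⟨a, ha⟩ := hx0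
  exact Finset.sum_pos' (fun i _ => mul_nonneg (hx i) (hN i b).le)
    ⟨a, Finset.mem_univ a, mul_pos ha (hN a b)⟩

lemma inf'_le_sup' (g : A → ℝ) :
    Finset.univ.inf' Finset.univ_nonempty g ≤ Finset.univ.sup' Finset.univ_nonempty g := by
  have a0 : A := Classical.arbitrary A
  exact le_trans (Finset.inf'_le g (Finset.mem_univ a0)) (Finset.le_sup' g (Finset.mem_univ a0))

lemma projMetric_nonneg {x y : A → ℝ} (hx : ∀ a, 0 < x a) (hy : ∀ a, 0 < y a) :
    0 ≤ projMetric x y := by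
  have a0 : A := Classical.arbitrary A
  have hinf : 0 < Finset.univ.inf' Finset.univ_nonempty fun a => x a / y a := by
    rw [Finset.lt_inf'_iff]
    exact fun a _ => div_pos (hx a) (hy a)
  exact Real.log_nonneg ((one_le_div hinf).2 (inf'_le_sup' _))

lemma exp_projMetric {x y : A → ℝ} (hx : ∀ a, 0 < x a) (hy : ∀ a, 0 < y a) :
    Real.exp (projMetric x y) =
      (Finset.univ.sup' Finset.univ_nonempty fun a => x a / y a) /
        (Finset.univ.inf' Finset.univ_nonempty fun a => x a / y a) := by
  have a0 : A := Classical.arbitrary A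
  have hinf : 0 < Finset.univ.inf' Finset.univ_nonempty fun a => x a / y a := by
    rw [Finset.lt_inf'_iff]; exact fun a _ => div_pos (hx a) (hy a)
  have hsup : 0 < Finset.univ.sup' Finset.univ_nonempty fun a => x a / y a :=
    lt_of_lt_of_le hinf (inf'_le_sup' _)
  exact Real.exp_log (div_pos hsup hinf)

/-- The elementary inequality behind Birkhoff's contraction. -/
lemma calc_lemma {φ : ℝ} (hφ0 : 0 < φ) (hφ1 : φ ≤ 1) {β : ℝ} (hβ : 1 ≤ β) :
    Real.log ((β + φ) / (1 + β * φ)) ≤ (1 - φ) / (1 + φ) * Real.log β := by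
  have h1φ : (0:ℝ) < 1 + φ := by linarith
  set c := (1 - φ) / (1 + φ) with hc
  set F : ℝ → ℝ := fun u => c * Real.log u - Real.log (u + φ) + Real.log (1 + φ * u) with hF
  have hder : ∀ u : ℝ, 1 ≤ u →
      HasDerivAt F (c * u⁻¹ - (u + φ)⁻¹ + (1 + φ * u)⁻¹ * φ) u := by
    intro u hu
    have hu0 : 0 < u := by linarith
    have h1 : HasDerivAt (fun v : ℝ => c * Real.log v) (c * u⁻¹) u :=
      (Real.hasDerivAt_log hu0.ne').const_mul c
    have h2 : HasDerivAt (fun v : ℝ => Real.log (v + φ)) ((u + φ)⁻¹) u := by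
      have hne : u + φ ≠ 0 := by positivity
      have := (Real.hasDerivAt_log hne).comp u ((hasDerivAt_id u).add_const φ)
      simpa [Function.comp_def] using this
    have h3 : HasDerivAt (fun v : ℝ => Real.log (1 + φ * v)) ((1 + φ * u)⁻¹ * φ) u := by
      have hpos : 0 < 1 + φ * u := by nlinarith
      have hin : HasDerivAt (fun v : ℝ => 1 + φ * v) φ u := by
        simpa using ((hasDerivAt_id u).const_mul φ).const_add 1
      exact (Real.hasDerivAt_log hpos.ne').comp u hin
    exact (h1.sub h2).add h3
  have hmono : MonotoneOn F (Set.Ici 1) := by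
    apply monotoneOn_of_deriv_nonneg (convex_Ici 1)
    · intro u hu
      exact ((hder u hu).continuousAt).continuousWithinAt
    · intro u hu
      rw [interior_Ici] at hu
      exact ((hder u (le_of_lt hu)).differentiableAt).differentiableWithinAt
    · intro u hu
      rw [interior_Ici] at hu
      have hu1 : 1 < u := hu
      rw [(hder u hu1.le).deriv]
      have h2 : (0:ℝ) < u + φ := by linarith
      have h3 : (0:ℝ) < 1 + φ * u := by nlinarith
      have hu0 : (0:ℝ) < u := by linarith
      have key : c * u⁻¹ - (u + φ)⁻¹ + (1 + φ * u)⁻¹ * φ =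
          (φ * (1 - φ) * (u - 1) ^ 2) / ((1 + φ) * u * (u + φ) * (1 + φ * u)) := by
        rw [hc]
        field_simp
        ring
      rw [key]
      apply div_nonneg
      · apply mul_nonneg (mul_nonneg hφ0.le (by linarith)) (sq_nonneg _)
      · positivity
  have hF1 : F 1 = 0 := by
    simp [hF, Real.log_one]
  have hFβ : 0 ≤ F β := by
    have := hmono (Set.mem_Ici.2 (le_refl (1:ℝ))) (Set.mem_Ici.2 hβ) hβ
    rwa [hF1] at this
  have hβφ : (0:ℝ) < β + φ := by linarith
  have h1βφ : (0:ℝ) < 1 + β * φ := by nlinarith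
  rw [Real.log_div hβφ.ne' h1βφ.ne']
  have hFβ' : 0 ≤ c * Real.log β - Real.log (β + φ) + Real.log (1 + φ * β) := hFβ
  rw [mul_comm φ β] at hFβ'
  linarith

/-- The key Birkhoff contraction estimate for a positive matrix. -/
lemma projMetric_contract {N : Matrix A A ℝ} (hN : ∀ a b, 0 < N a b)
    {x y : A → ℝ} (hx : ∀ a, 0 < x a) (hy : ∀ a, 0 < y a) :
    projMetric (Matrix.vecMul x N) (Matrix.vecMul y N) ≤
      (1 - phiC N) / (1 + phiC N) * projMetric x y := by
  classical
  have a0 : A := Classical.arbitrary A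
  set φ := phiC N with hφdef
  have hφ0 : 0 < φ := phiC_pos hN
  have hφ1 : φ ≤ 1 := phiC_le_one hN
  set Ms := Finset.univ.sup' Finset.univ_nonempty fun a => x a / y a with hMs
  set ms := Finset.univ.inf' Finset.univ_nonempty fun a => x a / y a with hms
  have hms0 : 0 < ms := by
    rw [hms, Finset.lt_inf'_iff]; exact fun a _ => div_pos (hx a) (hy a)
  have hmsle : ms ≤ Ms := inf'_le_sup' _
  set β := Ms / ms with hβdef
  have hβ1 : 1 ≤ β := (one_le_div hms0).2 hmsle
  have hMspos : 0 < Ms := lt_of_lt_of_le hms0 hmsle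
  have hbound : ∀ a a', x a * y a' ≤ β * (y a * x a') := by
    intro a a'
    have h1 : x a / y a ≤ Ms := Finset.le_sup' (fun a => x a / y a) (Finset.mem_univ a)
    have h2 : ms ≤ x a' / y a' := Finset.inf'_le (fun a => x a / y a) (Finset.mem_univ a')
    have hy1 := hy a
    have hy2 := hy a'
    have e1 : x a ≤ Ms * y a := by rw [div_le_iff₀ hy1] at h1; linarith
    have e2 : ms * y a' ≤ x a' := by rw [le_div_iff₀ hy2] at h2; linarith
    rw [hβdef, div_mul_eq_mul_div, le_div_iff₀ hms0]
    calc x a * y a' * ms = x a * (ms * y a') := by ring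
      _ ≤ Ms * y a * x a' := by
          apply mul_le_mul e1 e2 (mul_nonneg hms0.le hy2.le) (mul_nonneg hMspos.le hy1.le)
      _ = Ms * (y a * x a') := by ring
  have hXpos : ∀ b, 0 < Matrix.vecMul x N b :=
    vecMul_pos hN (fun a => (hx a).le) ⟨a0, hx a0⟩
  have hYpos : ∀ b, 0 < Matrix.vecMul y N b :=
    vecMul_pos hN (fun a => (hy a).le) ⟨a0, hy a0⟩
  have key : ∀ b b', (1 + β * φ) * (Matrix.vecMul x N b * Matrix.vecMul y N b') ≤
      (β + φ) * (Matrix.vecMul y N b * Matrix.vecMul x N b') := by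
    intro b b'
    have e1 : Matrix.vecMul x N b * Matrix.vecMul y N b'
        = ∑ p : A × A, x p.1 * N p.1 b * (y p.2 * N p.2 b') := by
      rw [vecMul_entry, vecMul_entry, Finset.sum_mul_sum, Fintype.sum_prod_type]
    have e2 : Matrix.vecMul y N b * Matrix.vecMul x N b'
        = ∑ p : A × A, y p.1 * N p.1 b * (x p.2 * N p.2 b') := by
      rw [vecMul_entry, vecMul_entry, Finset.sum_mul_sum, Fintype.sum_prod_type]
    rw [e1, e2, Finset.mul_sum, Finset.mul_sum]
    set L : A × A → ℝ := fun p => (1 + β * φ) * (x p.1 * N p.1 b * (y p.2 * N p.2 b')) with hL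
    set Rt : A × A → ℝ := fun p => (β + φ) * (y p.1 * N p.1 b * (x p.2 * N p.2 b')) with hR
    have hswap : ∀ F : A × A → ℝ, ∑ p : A × A, F p.swap = ∑ p : A × A, F p := by
      intro F
      exact Fintype.sum_equiv (Equiv.prodComm A A) _ _ (fun p => rfl)
    have hpair : ∀ p : A × A, L p + L p.swap ≤ Rt p + Rt p.swap := by
      rintro ⟨a, a'⟩
      have hb1 := hbound a a'
      have hb2 := hbound a' a
      have hq1 : φ * (N a' b * N a b') ≤ N a b * N a' b' := phiC_le hN a a' b b'
      have hq2 : φ * (N a b * N a' b') ≤ N a' b * N a b' := phiC_le hN a' a b b'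
      have A1 : 0 ≤ (β * (y a * x a') - x a * y a') * (N a b * N a' b' - φ * (N a' b * N a b')) :=
        mul_nonneg (by linarith) (by linarith)
      have A2 : 0 ≤ (β * (y a' * x a) - x a' * y a) * (N a' b * N a b' - φ * (N a b * N a' b')) :=
        mul_nonneg (by linarith) (by linarith)
      have hgoal : (1 + β * φ) * (x a * N a b * (y a' * N a' b')) +
          (1 + β * φ) * (x a' * N a' b * (y a * N a b')) ≤
          (β + φ) * (y a * N a b * (x a' * N a' b')) +
          (β + φ) * (y a' * N a' b * (x a * N a b')) := by
        nlinarith [A1, A2]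
      exact hgoal
    have h2 : ∑ p : A × A, (L p + L p.swap) ≤ ∑ p : A × A, (Rt p + Rt p.swap) :=
      Finset.sum_le_sum fun p _ => hpair p
    rw [Finset.sum_add_distrib, Finset.sum_add_distrib, hswap L, hswap Rt] at h2
    linarith
  obtain ⟨b1, -, hb1⟩ := Finset.exists_mem_eq_sup' (Finset.univ_nonempty (α := A))
    (fun b => Matrix.vecMul x N b / Matrix.vecMul y N b)
  obtain ⟨b2, -, hb2⟩ := Finset.exists_mem_eq_inf' (Finset.univ_nonempty (α := A))
    (fun b => Matrix.vecMul x N b / Matrix.vecMul y N b)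
  have h1βφ : (0:ℝ) < 1 + β * φ := by nlinarith
  have hβφ : (0:ℝ) < β + φ := by linarith
  have hratio : (Matrix.vecMul x N b1 / Matrix.vecMul y N b1) /
      (Matrix.vecMul x N b2 / Matrix.vecMul y N b2) ≤ (β + φ) / (1 + β * φ) := by
    have e3 : (Matrix.vecMul x N b1 / Matrix.vecMul y N b1) /
        (Matrix.vecMul x N b2 / Matrix.vecMul y N b2)
        = (Matrix.vecMul x N b1 * Matrix.vecMul y N b2) /
          (Matrix.vecMul y N b1 * Matrix.vecMul x N b2) := by
      field_simp
    rw [e3, div_le_div_iff₀ (mul_pos (hYpos b1) (hXpos b2)) h1βφ]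
    nlinarith [key b1 b2]
  have hsupinf_pos : 0 < (Matrix.vecMul x N b1 / Matrix.vecMul y N b1) /
      (Matrix.vecMul x N b2 / Matrix.vecMul y N b2) :=
    div_pos (div_pos (hXpos b1) (hYpos b1)) (div_pos (hXpos b2) (hYpos b2))
  have hlog1 : projMetric (Matrix.vecMul x N) (Matrix.vecMul y N)
      ≤ Real.log ((β + φ) / (1 + β * φ)) := by
    rw [projMetric, hb1, hb2]
    exact Real.log_le_log hsupinf_pos hratio
  have hcalc := calc_lemma hφ0 hφ1 hβ1
  have hpm : projMetric x y = Real.log β := rfl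
  rw [hpm]
  linarith

lemma projMetric_smul_self {y : A → ℝ} (hy : ∀ a, 0 < y a) {t : ℝ} (ht : 0 < t) :
    projMetric (t • y) y = 0 := by
  have hconst : (fun a => (t • y) a / y a) = fun _ : A => t := by
    funext a
    simp only [Pi.smul_apply, smul_eq_mul]
    rw [mul_div_assoc, div_self (hy a).ne', mul_one]
  rw [projMetric]
  simp only [hconst]
  rw [Finset.sup'_const, Finset.inf'_const, div_self ht.ne', Real.log_one]

lemma eq_smul_of_projMetric_ineq {x y : A → ℝ} (hx : ∀ a, 0 < x a) (hy : ∀ a, 0 < y a)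
    (hli : LinearIndependent ℝ ![x, y]) : 0 < projMetric x y := by
  have hnonneg := projMetric_nonneg hx hy
  rcases hnonneg.eq_or_lt with heq | h
  · exfalso
    -- sup = inf, hence x = t • y, contradicting linear independence
    have hinf : 0 < Finset.univ.inf' Finset.univ_nonempty fun a => x a / y a := by
      rw [Finset.lt_inf'_iff]; exact fun a _ => div_pos (hx a) (hy a)
    have hsup : 0 < Finset.univ.sup' Finset.univ_nonempty fun a => x a / y a :=
      lt_of_lt_of_le hinf (inf'_le_sup' _)
    have hone : (Finset.univ.sup' Finset.univ_nonempty fun a => x a / y a) /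
        (Finset.univ.inf' Finset.univ_nonempty fun a => x a / y a) = 1 := by
      have := heq.symm
      rw [projMetric] at this
      have h1 := Real.exp_log (div_pos hsup hinf)
      rw [this, Real.exp_zero] at h1
      exact h1.symm
    have hei : (Finset.univ.sup' Finset.univ_nonempty fun a => x a / y a) =
        Finset.univ.inf' Finset.univ_nonempty fun a => x a / y a := by
      field_simp at hone
      exact hone
    set t := Finset.univ.inf' Finset.univ_nonempty fun a => x a / y a with htdef
    have hxy : x = t • y := by
      funext a
      have h1 : x a / y a ≤ t := by
        rw [← hei]; exact Finset.le_sup' (fun a => x a / y a) (Finset.mem_univ a)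
      have h2 : t ≤ x a / y a := Finset.inf'_le (fun a => x a / y a) (Finset.mem_univ a)
      have h3 : x a / y a = t := le_antisymm h1 h2
      simp only [Pi.smul_apply, smul_eq_mul]
      rw [← h3, div_mul_cancel₀ _ (hy a).ne']
    obtain ⟨hs, ht⟩ := LinearIndependent.pair_iff.mp hli 1 (-t)
      (by rw [hxy]; funext a; simp)
    exact one_ne_zero hs
  · exact h

lemma birkhoff_mem_le {N : Matrix A A ℝ} (hN : ∀ a b, 0 < N a b) {r : ℝ}
    (hr : r ∈ { r | ∃ x y : A → ℝ, (∀ a, 0 < x a) ∧ (∀ a, 0 < y a) ∧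
      LinearIndependent ℝ ![x, y] ∧
      r = projMetric (Matrix.vecMul x N) (Matrix.vecMul y N) / projMetric x y }) :
    r ≤ (1 - phiC N) / (1 + phiC N) := by
  obtain ⟨x, y, hx, hy, hli, rfl⟩ := hr
  have hd := eq_smul_of_projMetric_ineq hx hy hli
  rw [div_le_iff₀ hd]
  exact projMetric_contract hN hx hy

lemma birkhoff_bddAbove {N : Matrix A A ℝ} (hN : ∀ a b, 0 < N a b) :
    BddAbove { r | ∃ x y : A → ℝ, (∀ a, 0 < x a) ∧ (∀ a, 0 < y a) ∧
      LinearIndependent ℝ ![x, y] ∧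
      r = projMetric (Matrix.vecMul x N) (Matrix.vecMul y N) / projMetric x y } :=
  ⟨(1 - phiC N) / (1 + phiC N), fun _ hr => birkhoff_mem_le hN hr⟩

lemma birkhoff_le {N : Matrix A A ℝ} (hN : ∀ a b, 0 < N a b) :
    birkhoff N ≤ (1 - phiC N) / (1 + phiC N) := by
  apply Real.sSup_le (fun r hr => birkhoff_mem_le hN hr)
  have h0 := phiC_pos hN
  have h1 := phiC_le_one hN
  apply div_nonneg (by linarith) (by linarith)

lemma birkhoff_lt_one {N : Matrix A A ℝ} (hN : ∀ a b, 0 < N a b) : birkhoff N < 1 := by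
  have h0 := phiC_pos hN
  have h1 := phiC_le_one hN
  have h2 : (1 - phiC N) / (1 + phiC N) < 1 := by
    rw [div_lt_one (by linarith)]
    linarith
  exact lt_of_le_of_lt (birkhoff_le hN) h2

lemma birkhoff_nonneg {N : Matrix A A ℝ} (hN : ∀ a b, 0 < N a b)
    (hcard : 2 ≤ Fintype.card A) : 0 ≤ birkhoff N := by
  obtain ⟨a1, b1, hab⟩ := Fintype.exists_pair_of_one_lt_card (α := A) (by omega)
  classical
  set x : A → ℝ := fun _ => 1 with hxdef
  set y : A → ℝ := fun a => if a = a1 then 2 else 1 with hydef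
  have hx : ∀ a, 0 < x a := fun a => one_pos
  have hy : ∀ a, 0 < y a := by
    intro a
    rw [hydef]
    dsimp only
    split <;> norm_num
  have hli : LinearIndependent ℝ ![x, y] := by
    rw [LinearIndependent.pair_iff]
    intro s t hst
    have h1 := congrFun hst b1
    have h2 := congrFun hst a1
    simp only [Pi.add_apply, Pi.smul_apply, Pi.zero_apply, smul_eq_mul] at h1 h2
    have hx1 : x b1 = 1 := rfl
    have hx2 : x a1 = 1 := rfl
    have hy1 : y b1 = 1 := by rw [hydef]; simp [Ne.symm hab]
    have hy2 : y a1 = 2 := by rw [hydef]; simp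
    rw [hx1, hy1] at h1
    rw [hx2, hy2] at h2
    constructor <;> linarith
  have hmem : projMetric (Matrix.vecMul x N) (Matrix.vecMul y N) / projMetric x y ∈
      { r | ∃ x y : A → ℝ, (∀ a, 0 < x a) ∧ (∀ a, 0 < y a) ∧
        LinearIndependent ℝ ![x, y] ∧
        r = projMetric (Matrix.vecMul x N) (Matrix.vecMul y N) / projMetric x y } :=
    ⟨x, y, hx, hy, hli, rfl⟩
  have a0 : A := Classical.arbitrary A
  have hnn : 0 ≤ projMetric (Matrix.vecMul x N) (Matrix.vecMul y N) / projMetric x y := by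
    apply div_nonneg
    · exact projMetric_nonneg (vecMul_pos hN (fun a => (hx a).le) ⟨a0, hx a0⟩)
        (vecMul_pos hN (fun a => (hy a).le) ⟨a0, hy a0⟩)
    · exact projMetric_nonneg hx hy
  exact le_trans hnn (le_csSup (birkhoff_bddAbove hN) hmem)

/-- One contraction step measured by the Birkhoff coefficient. -/
lemma projMetric_vecMul_le_birkhoff {N : Matrix A A ℝ} (hN : ∀ a b, 0 < N a b)
    {x y : A → ℝ} (hx : ∀ a, 0 < x a) (hy : ∀ a, 0 < y a) :
    projMetric (Matrix.vecMul x N) (Matrix.vecMul y N) ≤ birkhoff N * projMetric x y := by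
  classical
  by_cases hprop : ∃ t : ℝ, x = t • y
  · obtain ⟨t, rfl⟩ := hprop
    have a0 : A := Classical.arbitrary A
    have ht : 0 < t := by
      have h1 := hx a0
      have h2 := hy a0
      simp only [Pi.smul_apply, smul_eq_mul] at h1
      nlinarith
    rw [Matrix.smul_vecMul]
    have hYpos : ∀ b, 0 < Matrix.vecMul y N b :=
      vecMul_pos hN (fun a => (hy a).le) ⟨a0, hy a0⟩
    rw [projMetric_smul_self hYpos ht, projMetric_smul_self hy ht, mul_zero]
  · have hli : LinearIndependent ℝ ![x, y] := by
      rw [LinearIndependent.pair_iff]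
      intro s t hst
      by_cases hs : s = 0
      · subst hs
        constructor
        · rfl
        · have a0 : A := Classical.arbitrary A
          have := congrFun hst a0
          simp only [Pi.add_apply, Pi.smul_apply, Pi.zero_apply, smul_eq_mul, zero_mul,
            zero_add] at this
          rcases mul_eq_zero.mp this with h | h
          · exact h
          · exact absurd h (hy a0).ne'
      · exfalso
        apply hprop
        refine ⟨-t / s, ?_⟩
        funext a
        have := congrFun hst a
        simp only [Pi.add_apply, Pi.smul_apply, Pi.zero_apply, smul_eq_mul] at this ⊢
        field_simp
        linarith
    have hd := eq_smul_of_projMetric_ineq hx hy hli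
    have hmem : projMetric (Matrix.vecMul x N) (Matrix.vecMul y N) / projMetric x y ∈
        { r | ∃ x y : A → ℝ, (∀ a, 0 < x a) ∧ (∀ a, 0 < y a) ∧
          LinearIndependent ℝ ![x, y] ∧
          r = projMetric (Matrix.vecMul x N) (Matrix.vecMul y N) / projMetric x y } :=
      ⟨x, y, hx, hy, hli, rfl⟩
    have hle := le_csSup (birkhoff_bddAbove hN) hmem
    calc projMetric (Matrix.vecMul x N) (Matrix.vecMul y N)
        = projMetric (Matrix.vecMul x N) (Matrix.vecMul y N) / projMetric x y *
          projMetric x y := (div_mul_cancel₀ _ hd.ne').symm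
      _ ≤ birkhoff N * projMetric x y := mul_le_mul_of_nonneg_right hle (projMetric_nonneg hx hy)


end BirkhoffPart


section Glue
set_option linter.unusedSectionVars false
set_option maxHeartbeats 1000000
variable {A : Type*} [Fintype A] [Nonempty A] [DecidableEq A]

lemma substWord_ne_nil {σ : A → List A} (hσ : ∀ a, σ a ≠ []) {w : List A} (hw : w ≠ []) :
    substWord σ w ≠ [] := by
  cases w with
  | nil => exact absurd rfl hw
  | cons a w =>
    show (a :: w).flatMap σ ≠ []
    rw [List.flatMap_cons]
    intro h
    exact hσ a (List.append_eq_nil_iff.mp h).1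

lemma substPow_ne_nil {σ : A → List A} (hσ : ∀ a, σ a ≠ []) (p : ℕ) {w : List A}
    (hw : w ≠ []) : substPow σ p w ≠ [] := by
  induction p with
  | zero => exact hw
  | succ p ih =>
    rw [substPow, Function.iterate_succ_apply']
    exact substWord_ne_nil hσ ih

lemma count_substWord (σ : A → List A) (w : List A) (b : A) :
    (substWord σ w).count b = ∑ a, w.count a * (σ a).count b := by
  induction w with
  | nil => simp [substWord]
  | cons c w ih =>
    have h1 : substWord σ (c :: w) = σ c ++ substWord σ w := rfl
    rw [h1, List.count_append, ih]
    have h2 : ∀ a : A, (c :: w).count a = w.count a + if c = a then 1 else 0 := by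
      intro a
      rw [List.count_cons]
      congr 1
      by_cases h : a = c
      · subst h; simp
      · simp [h, Ne.symm h]
    have h3 : ∑ a, (c :: w).count a * (σ a).count b
        = (∑ a, w.count a * (σ a).count b) + (σ c).count b := by
      simp only [h2, add_mul, ite_mul, one_mul, zero_mul]
      rw [Finset.sum_add_distrib, Finset.sum_ite_eq]
      simp
    omega

lemma length_eq_sum_count (w : List A) : w.length = ∑ b, w.count b := by
  induction w with
  | nil => simp
  | cons c w ih =>
    simp only [List.length_cons, List.count_cons, beq_iff_eq]
    rw [Finset.sum_add_distrib, Finset.sum_ite_eq]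
    simp [ih]

lemma single_vecMul (N : Matrix A A ℝ) (b c : A) :
    Matrix.vecMul (Pi.single b 1) N c = N b c := by
  rw [vecMul_entry]
  simp [Pi.single_apply, ite_mul, Finset.sum_ite_eq]

lemma count_vec_substPow (σ : A → List A) (p : ℕ) (a : A) :
    (fun b => ((substPow σ p [a]).count b : ℝ)) =
      Matrix.vecMul (Pi.single a 1) ((incMatrixR σ) ^ p) := by
  induction p with
  | zero =>
    funext b
    rw [pow_zero, Matrix.vecMul_one]
    have h0 : substPow σ 0 [a] = [a] := rfl
    rw [h0, Pi.single_apply]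
    by_cases h : b = a
    · subst h
      simp
    · simp [List.count_cons, h, Ne.symm h]
  | succ p ih =>
    funext b
    have h1 : substPow σ (p + 1) [a] = substWord σ (substPow σ p [a]) := by
      rw [substPow, Function.iterate_succ_apply']
      rfl
    rw [h1, count_substWord]
    push_cast
    rw [pow_succ, ← Matrix.vecMul_vecMul, ← ih, vecMul_entry]
    rfl

lemma incMatrixR_nonneg (σ : A → List A) : ∀ a b, 0 ≤ incMatrixR σ a b := by
  intro a b
  show (0:ℝ) ≤ ((σ a).count b : ℝ)
  positivity

lemma eigen_pow {σ : A → List A} {lam : ℝ} {α : A → ℝ}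
    (heig : Matrix.vecMul α (incMatrixR σ) = lam • α) (j : ℕ) :
    Matrix.vecMul α ((incMatrixR σ) ^ j) = (lam ^ j) • α := by
  induction j with
  | zero => simp [Matrix.vecMul_one]
  | succ j ih =>
    rw [pow_succ, ← Matrix.vecMul_vecMul, ih, Matrix.smul_vecMul, heig, smul_smul, ← pow_succ]

lemma projMetric_smul_right {x y : A → ℝ} {t : ℝ} (ht : 0 < t) :
    projMetric x (t • y) = projMetric x y := by
  have he : (fun a => x a / (t • y) a) = fun a => (x a / y a) / t := by
    funext a
    simp only [Pi.smul_apply, smul_eq_mul]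
    rw [div_div, mul_comm]
  have hsup := Finset.comp_sup'_eq_sup'_comp (s := (Finset.univ : Finset A))
    Finset.univ_nonempty (f := fun a => x a / y a) (fun z => z / t)
    (fun u v => (max_div_div_right ht.le u v).symm)
  have hinf := Finset.apply_inf'_eq_inf'_comp (s := (Finset.univ : Finset A))
    Finset.univ_nonempty (f := fun a => x a / y a) (fun z => z / t)
    (fun u v => (min_div_div_right ht.le u v).symm)
  simp only [Function.comp] at hsup hinf
  rw [projMetric, projMetric, he, ← hsup, ← hinf, div_div_div_comm, div_self ht.ne', div_one]

lemma start_bound {N : Matrix A A ℝ} (hN : ∀ a b, 0 < N a b) {v : A → ℝ}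
    (hv : ∀ a, 0 ≤ v a) (hv0 : ∃ a, 0 < v a) {α : A → ℝ} (hα : ∀ a, 0 < α a) :
    projMetric (Matrix.vecMul v N) α ≤
      Finset.univ.sup' Finset.univ_nonempty
        (fun b => projMetric (Matrix.vecMul (Pi.single b 1) N) α) := by
  classical
  set Rb : A → ℝ := fun b => Finset.univ.sup' Finset.univ_nonempty (fun c => N b c / α c)
    with hRbdef
  set rb : A → ℝ := fun b => Finset.univ.inf' Finset.univ_nonempty (fun c => N b c / α c)
    with hrbdef
  have hrb0 : ∀ b, 0 < rb b := by
    intro b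
    rw [hrbdef]
    dsimp only
    rw [Finset.lt_inf'_iff]
    exact fun c _ => div_pos (hN b c) (hα c)
  have hRb0 : ∀ b, 0 < Rb b := fun b => lt_of_lt_of_le (hrb0 b) (inf'_le_sup' _)
  have hNle : ∀ b c, N b c ≤ Rb b * α c := by
    intro b c
    have h := Finset.le_sup' (fun c => N b c / α c) (Finset.mem_univ c)
    rw [div_le_iff₀ (hα c)] at h
    exact h
  have hNge : ∀ b c, rb b * α c ≤ N b c := by
    intro b c
    have h := Finset.inf'_le (fun c => N b c / α c) (Finset.mem_univ c)
    rw [le_div_iff₀ (hα c)] at h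
    exact h
  obtain ⟨a1, ha1⟩ := hv0
  have hSr0 : 0 < ∑ b, v b * rb b :=
    Finset.sum_pos' (fun b _ => mul_nonneg (hv b) (hrb0 b).le)
      ⟨a1, Finset.mem_univ a1, mul_pos ha1 (hrb0 a1)⟩
  have hup : ∀ c, Matrix.vecMul v N c / α c ≤ ∑ b, v b * Rb b := by
    intro c
    rw [div_le_iff₀ (hα c), vecMul_entry]
    calc ∑ b, v b * N b c ≤ ∑ b, v b * (Rb b * α c) :=
          Finset.sum_le_sum fun b _ => mul_le_mul_of_nonneg_left (hNle b c) (hv b)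
      _ = (∑ b, v b * Rb b) * α c := by
          rw [Finset.sum_mul]
          exact Finset.sum_congr rfl fun b _ => by ring
  have hlo : ∀ c, (∑ b, v b * rb b) ≤ Matrix.vecMul v N c / α c := by
    intro c
    rw [le_div_iff₀ (hα c), vecMul_entry]
    calc (∑ b, v b * rb b) * α c = ∑ b, v b * (rb b * α c) := by
          rw [Finset.sum_mul]
          exact Finset.sum_congr rfl fun b _ => by ring
      _ ≤ ∑ b, v b * N b c :=
          Finset.sum_le_sum fun b _ => mul_le_mul_of_nonneg_left (hNge b c) (hv b)
  have h1 : Finset.univ.sup' Finset.univ_nonempty (fun c => Matrix.vecMul v N c / α c)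
      ≤ ∑ b, v b * Rb b := Finset.sup'_le _ _ fun c _ => hup c
  have h2 : (∑ b, v b * rb b) ≤
      Finset.univ.inf' Finset.univ_nonempty (fun c => Matrix.vecMul v N c / α c) :=
    Finset.le_inf' _ _ fun c _ => hlo c
  obtain ⟨bs, -, hbs⟩ := Finset.exists_mem_eq_sup' (Finset.univ_nonempty (α := A))
    (fun b => Rb b / rb b)
  have hKnn : 0 ≤ Rb bs / rb bs := div_nonneg (hRb0 bs).le (hrb0 bs).le
  have hK : ∀ b, Rb b ≤ Rb bs / rb bs * rb b := by
    intro b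
    have h := Finset.le_sup' (fun b => Rb b / rb b) (Finset.mem_univ b)
    rw [hbs] at h
    rw [div_le_iff₀ (hrb0 b)] at h
    exact h
  have hSRK : (∑ b, v b * Rb b) ≤ Rb bs / rb bs * ∑ b, v b * rb b := by
    rw [Finset.mul_sum]
    apply Finset.sum_le_sum
    intro b _
    calc v b * Rb b ≤ v b * (Rb bs / rb bs * rb b) :=
          mul_le_mul_of_nonneg_left (hK b) (hv b)
      _ = Rb bs / rb bs * (v b * rb b) := by ring
  have hvN : ∀ c, 0 < Matrix.vecMul v N c := vecMul_pos hN hv ⟨a1, ha1⟩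
  have hinfpos : 0 < Finset.univ.inf' Finset.univ_nonempty
      (fun c => Matrix.vecMul v N c / α c) := by
    rw [Finset.lt_inf'_iff]
    exact fun c _ => div_pos (hvN c) (hα c)
  have hsuppos : 0 < Finset.univ.sup' Finset.univ_nonempty
      (fun c => Matrix.vecMul v N c / α c) := lt_of_lt_of_le hinfpos (inf'_le_sup' _)
  have hfrac : (Finset.univ.sup' Finset.univ_nonempty (fun c => Matrix.vecMul v N c / α c)) /
      (Finset.univ.inf' Finset.univ_nonempty (fun c => Matrix.vecMul v N c / α c))
      ≤ Rb bs / rb bs := by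
    rw [div_le_iff₀ hinfpos]
    calc Finset.univ.sup' Finset.univ_nonempty (fun c => Matrix.vecMul v N c / α c)
        ≤ ∑ b, v b * Rb b := h1
      _ ≤ Rb bs / rb bs * ∑ b, v b * rb b := hSRK
      _ ≤ Rb bs / rb bs * Finset.univ.inf' Finset.univ_nonempty
            (fun c => Matrix.vecMul v N c / α c) := mul_le_mul_of_nonneg_left h2 hKnn
  have hrow : ∀ b, projMetric (Matrix.vecMul (Pi.single b 1) N) α
      = Real.log (Rb b / rb b) := by
    intro b
    have he : (fun c => Matrix.vecMul (Pi.single b 1) N c / α c) = fun c => N b c / α c := by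
      funext c
      rw [single_vecMul]
    rw [projMetric, he]
  calc projMetric (Matrix.vecMul v N) α
      ≤ Real.log (Rb bs / rb bs) :=
        Real.log_le_log (div_pos hsuppos hinfpos) hfrac
    _ = projMetric (Matrix.vecMul (Pi.single bs 1) N) α := (hrow bs).symm
    _ ≤ Finset.univ.sup' Finset.univ_nonempty
          (fun b => projMetric (Matrix.vecMul (Pi.single b 1) N) α) :=
        Finset.le_sup' (fun b => projMetric (Matrix.vecMul (Pi.single b 1) N) α)
          (Finset.mem_univ bs)

lemma chain_bound {N : Matrix A A ℝ} (hN : ∀ a b, 0 < N a b) (hcard : 2 ≤ Fintype.card A)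
    {x y : A → ℝ} (hx : ∀ a, 0 < x a) (hy : ∀ a, 0 < y a) (j : ℕ) :
    projMetric (Matrix.vecMul x (N ^ j)) (Matrix.vecMul y (N ^ j)) ≤
      birkhoff N ^ j * projMetric x y := by
  induction j generalizing x y with
  | zero =>
    rw [pow_zero, pow_zero, Matrix.vecMul_one, Matrix.vecMul_one, one_mul]
  | succ j ih =>
    have a0 : A := Classical.arbitrary A
    have hxN : ∀ a, 0 < Matrix.vecMul x N a :=
      vecMul_pos hN (fun a => (hx a).le) ⟨a0, hx a0⟩
    have hyN : ∀ a, 0 < Matrix.vecMul y N a :=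
      vecMul_pos hN (fun a => (hy a).le) ⟨a0, hy a0⟩
    rw [pow_succ', ← Matrix.vecMul_vecMul, ← Matrix.vecMul_vecMul]
    calc projMetric (Matrix.vecMul (Matrix.vecMul x N) (N ^ j))
          (Matrix.vecMul (Matrix.vecMul y N) (N ^ j))
        ≤ birkhoff N ^ j * projMetric (Matrix.vecMul x N) (Matrix.vecMul y N) := ih hxN hyN
      _ ≤ birkhoff N ^ j * (birkhoff N * projMetric x y) :=
          mul_le_mul_of_nonneg_left (projMetric_vecMul_le_birkhoff hN hx hy)
            (pow_nonneg (birkhoff_nonneg hN hcard) j)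
      _ = birkhoff N ^ (j + 1) * projMetric x y := by ring

lemma l1_bound {x α : A → ℝ} (hx : ∀ a, 0 < x a) (hα : ∀ a, 0 < α a) :
    (∑ b, |x b / (∑ a, x a) - α b / (∑ a, α a)|) ≤ Real.exp (projMetric x α) - 1 := by
  classical
  set Ms := Finset.univ.sup' Finset.univ_nonempty (fun a => x a / α a) with hMsdef
  set ms := Finset.univ.inf' Finset.univ_nonempty (fun a => x a / α a) with hmsdef
  have hms0 : 0 < ms := by
    rw [hmsdef, Finset.lt_inf'_iff]
    exact fun a _ => div_pos (hx a) (hα a)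
  have hmsle : ms ≤ Ms := inf'_le_sup' _
  have hexp : Real.exp (projMetric x α) = Ms / ms := exp_projMetric hx hα
  have hs0 : 0 < ∑ a, x a := Finset.sum_pos (fun a _ => hx a) Finset.univ_nonempty
  have ht0 : 0 < ∑ a, α a := Finset.sum_pos (fun a _ => hα a) Finset.univ_nonempty
  have hmt : ms * ∑ a, α a ≤ ∑ a, x a := by
    rw [Finset.mul_sum]
    apply Finset.sum_le_sum
    intro a _
    have h := Finset.inf'_le (fun a => x a / α a) (Finset.mem_univ a)
    rw [le_div_iff₀ (hα a)] at h
    exact h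
  have hbound : ∀ b, |x b / (∑ a, x a) - α b / (∑ a, α a)|
      ≤ α b * (Ms - ms) / (∑ a, x a) := by
    intro b
    have he : x b / (∑ a, x a) - α b / (∑ a, α a)
        = (x b * (∑ a, α a) - α b * (∑ a, x a)) / ((∑ a, x a) * (∑ a, α a)) := by
      field_simp
    have hnum : |x b * (∑ a, α a) - α b * (∑ a, x a)| ≤ α b * (Ms - ms) * ∑ a, α a := by
      have he2 : x b * (∑ a, α a) - α b * (∑ a, x a)
          = ∑ b', (x b * α b' - α b * x b') := by
        rw [Finset.mul_sum, Finset.mul_sum, ← Finset.sum_sub_distrib]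
      rw [he2]
      calc |∑ b', (x b * α b' - α b * x b')| ≤ ∑ b', |x b * α b' - α b * x b'| :=
            Finset.abs_sum_le_sum_abs _ _
        _ ≤ ∑ b', α b * α b' * (Ms - ms) := by
            apply Finset.sum_le_sum
            intro b' _
            have e3 : x b * α b' - α b * x b'
                = α b * α b' * (x b / α b - x b' / α b') := by
              rw [div_sub_div _ _ (hα b).ne' (hα b').ne',
                mul_comm (α b * α b'), div_mul_cancel₀ _ (mul_pos (hα b) (hα b')).ne']
            rw [e3, abs_mul, abs_of_pos (mul_pos (hα b) (hα b'))]
            apply mul_le_mul_of_nonneg_left _ (mul_pos (hα b) (hα b')).le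
            rw [abs_sub_le_iff]
            have hub1 : x b / α b ≤ Ms := Finset.le_sup' (fun a => x a / α a) (Finset.mem_univ b)
            have hub2 : x b' / α b' ≤ Ms :=
              Finset.le_sup' (fun a => x a / α a) (Finset.mem_univ b')
            have hlb1 : ms ≤ x b / α b := Finset.inf'_le (fun a => x a / α a) (Finset.mem_univ b)
            have hlb2 : ms ≤ x b' / α b' :=
              Finset.inf'_le (fun a => x a / α a) (Finset.mem_univ b')
            constructor <;> linarith
        _ = α b * (Ms - ms) * ∑ a, α a := by
            rw [Finset.mul_sum]
            exact Finset.sum_congr rfl fun b' _ => by ring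
    rw [he, abs_div, abs_of_pos (mul_pos hs0 ht0)]
    calc |x b * (∑ a, α a) - α b * (∑ a, x a)| / ((∑ a, x a) * (∑ a, α a))
        ≤ (α b * (Ms - ms) * ∑ a, α a) / ((∑ a, x a) * (∑ a, α a)) := by
          have hdiff : 0 ≤ Ms - ms := by linarith
          apply div_le_div₀
            (mul_nonneg (mul_nonneg (hα b).le hdiff) ht0.le) hnum (mul_pos hs0 ht0) le_rfl
      _ = α b * (Ms - ms) / (∑ a, x a) := by
          rw [mul_div_mul_right _ _ ht0.ne']
  calc (∑ b, |x b / (∑ a, x a) - α b / (∑ a, α a)|)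
      ≤ ∑ b, α b * (Ms - ms) / (∑ a, x a) := Finset.sum_le_sum fun b _ => hbound b
    _ = (∑ a, α a) * (Ms - ms) / (∑ a, x a) := by
        rw [← Finset.sum_div, ← Finset.sum_mul]
    _ ≤ (Ms - ms) / ms := by
        rw [div_le_div_iff₀ hs0 hms0]
        have hd : 0 ≤ Ms - ms := by linarith
        nlinarith [hmt, hd, hms0, ht0]
    _ = Ms / ms - 1 := by rw [sub_div, div_self hms0.ne']
    _ = Real.exp (projMetric x α) - 1 := by rw [hexp]

end Glue

/-- Inequality (4.4): for `n ≥ 2n₀`, the ℓ¹ distance between the normalized letter-count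
vector of `σⁿ(a)` and the normalized left Perron eigenvector `α` is at most
`exp(max_b d(e_b M^{n₀}, α))^{τ_B(M^{n₀})^{⌊n/n₀⌋−1}} − 1`, a bound which monotonically
decreases to zero. -/
theorem stmt_11 (A : Type*) [Fintype A] [DecidableEq A] [Nonempty A]
    (h2 : 2 ≤ Fintype.card A)
    (σ : A → List A) (hσne : ∀ a, σ a ≠ [])
    (hprim : IsPrimitiveSubst σ)
    (lam : ℝ) (α : A → ℝ) (hα : ∀ a, 0 < α a)
    (heig : Matrix.vecMul α (incMatrixR σ) = lam • α)
    (n₀ : ℕ) (hn₀ : n₀ = Fintype.card A ^ 2 - 2 * Fintype.card A + 2)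
    (B : ℕ → ℝ)
    (hB : ∀ n : ℕ, B n =
      Real.exp (Finset.univ.sup' Finset.univ_nonempty fun b =>
          projMetric (Matrix.vecMul (Pi.single b 1) ((incMatrixR σ) ^ n₀)) α) ^
        (birkhoff ((incMatrixR σ) ^ n₀) ^ (n / n₀ - 1)) - 1) :
    (∀ (a : A) (n : ℕ), 2 * n₀ ≤ n →
        l1norm (fun b => ((substPow σ n [a]).count b : ℝ) / ((substPow σ n [a]).length : ℝ)
            - α b / l1norm α) ≤ B n) ∧
    Antitone B ∧ Filter.Tendsto B Filter.atTop (nhds 0) := by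
  classical
  set M : Matrix A A ℝ := incMatrixR σ with hMdef
  have hMnn : ∀ a b, 0 ≤ M a b := incMatrixR_nonneg σ
  set R : A → A → Prop := fun a b => 0 < M a b with hRdef
  obtain ⟨k, hk⟩ := hprim
  have hwalkk : ∀ a b : A, HasWalk R k a b := by
    intro a b
    rw [hRdef, hasWalk_iff_pow_pos hMnn]
    have hc := hk b a
    have hcount : 0 < (substPow σ k [a]).count b := List.count_pos_iff.mpr hc
    have hcv := congrFun (count_vec_substPow σ k a) b
    rw [single_vecMul] at hcv
    rw [← hcv]
    exact_mod_cast hcount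
  have hout : ∀ a : A, ∃ b, R a b := by
    intro a
    obtain ⟨b, hb⟩ := List.exists_mem_of_ne_nil (σ a) (hσne a)
    refine ⟨b, ?_⟩
    show (0:ℝ) < ((σ a).count b : ℝ)
    exact_mod_cast List.count_pos_iff.mpr hb
  have hn2 : 2 ≤ Fintype.card A := h2
  have hwiel : ∀ a b : A, HasWalk R (Fintype.card A ^ 2 - 2 * Fintype.card A + 2) a b :=
    wielandt_hasWalk hn2 hout ⟨k, hwalkk⟩
  have hn₀2 : 2 ≤ n₀ := by
    rw [hn₀]
    exact Nat.le_add_left 2 _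
  have hwieln₀ : ∀ a b : A, HasWalk R n₀ a b := hn₀ ▸ hwiel
  have hNpos : ∀ a b, 0 < (M ^ n₀) a b := by
    intro a b
    rw [← hasWalk_iff_pow_pos hMnn]
    exact hwieln₀ a b
  have hallwalk : ∀ m, n₀ ≤ m → ∀ a b : A, HasWalk R m a b := hasWalk_pad hout hwieln₀
  have hMpos_all : ∀ m, n₀ ≤ m → ∀ a b, 0 < (M ^ m) a b := fun m hm a b =>
    (hasWalk_iff_pow_pos hMnn m a b).mp (hallwalk m hm a b)
  set N := M ^ n₀ with hNdef
  set τ := birkhoff N with hτdef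
  have hτ0 : 0 ≤ τ := birkhoff_nonneg hNpos hn2
  have hτ1 : τ < 1 := birkhoff_lt_one hNpos
  set D := Finset.univ.sup' Finset.univ_nonempty
    (fun b => projMetric (Matrix.vecMul (Pi.single b 1) N) α) with hDdef
  have hD0 : 0 ≤ D := by
    have b0 : A := Classical.arbitrary A
    have hrowpos : ∀ c, 0 < Matrix.vecMul (Pi.single b0 1) N c := by
      intro c
      rw [single_vecMul]
      exact hNpos b0 c
    rw [hDdef]
    exact le_trans (projMetric_nonneg hrowpos hα)
      (Finset.le_sup' (fun b => projMetric (Matrix.vecMul (Pi.single b 1) N) α)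
        (Finset.mem_univ b0))
  have hlam : 0 < lam := by
    have b0 : A := Classical.arbitrary A
    have hdec : M ^ n₀ = M ^ (n₀ - 1) * M := by
      rw [← pow_succ]
      congr 1
      omega
    have hp := hNpos b0 b0
    rw [hNdef, hdec] at hp
    obtain ⟨c, hc1, hc2⟩ := (mul_entry_pos_iff (entry_pow_nonneg hMnn _) hMnn b0 b0).mp hp
    have hcol : 0 < Matrix.vecMul α M b0 := by
      rw [vecMul_entry]
      exact Finset.sum_pos' (fun i _ => mul_nonneg (hα i).le (hMnn i b0))
        ⟨c, Finset.mem_univ c, mul_pos (hα c) hc2⟩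
    have h1 := congrFun heig b0
    simp only [Pi.smul_apply, smul_eq_mul] at h1
    rw [h1] at hcol
    nlinarith [hα b0]
  have hτpow : ∀ m : ℕ, B m = Real.exp (D * τ ^ (m / n₀ - 1)) - 1 := by
    intro m
    rw [hB m, Real.rpow_def_of_pos (Real.exp_pos _), Real.log_exp]
  have hanti : Antitone B := by
    intro m n hmn
    rw [hτpow m, hτpow n]
    apply sub_le_sub_right
    rw [Real.exp_le_exp]
    apply mul_le_mul_of_nonneg_left _ hD0
    apply pow_le_pow_of_le_one hτ0 hτ1.le
    exact Nat.sub_le_sub_right (Nat.div_le_div_right hmn) 1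
  have htend : Filter.Tendsto B Filter.atTop (nhds 0) := by
    have hBfun : B = fun m => Real.exp (D * τ ^ (m / n₀ - 1)) - 1 := funext hτpow
    rw [hBfun]
    have hg : Filter.Tendsto (fun m : ℕ => m / n₀ - 1) Filter.atTop Filter.atTop := by
      apply Filter.tendsto_atTop_atTop.mpr
      intro K
      refine ⟨n₀ * (K + 1), fun m hm => ?_⟩
      have h1 : K + 1 ≤ m / n₀ := by
        rw [Nat.le_div_iff_mul_le (by omega : 0 < n₀)]
        calc (K + 1) * n₀ = n₀ * (K + 1) := Nat.mul_comm _ _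
          _ ≤ m := hm
      omega
    have hpow : Filter.Tendsto (fun m : ℕ => τ ^ (m / n₀ - 1)) Filter.atTop (nhds 0) :=
      (tendsto_pow_atTop_nhds_zero_of_lt_one hτ0 hτ1).comp hg
    have hcont : Filter.Tendsto (fun t : ℝ => Real.exp (D * t) - 1) (nhds 0) (nhds 0) := by
      have hc : Continuous fun t : ℝ => Real.exp (D * t) - 1 := by continuity
      have h0 := hc.tendsto 0
      simpa using h0
    exact hcont.comp hpow
  refine ⟨?_, hanti, htend⟩
  intro a n hn
  have hn₀pos : 0 < n₀ := by omega
  set q := n / n₀ with hqdef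
  have hq2 : 2 ≤ q := by
    rw [hqdef, Nat.le_div_iff_mul_le hn₀pos]
    omega
  obtain ⟨q', hq'⟩ : ∃ q', q = q' + 1 := ⟨q - 1, by omega⟩
  have hdm : n₀ * q + n % n₀ = n := Nat.div_add_mod n n₀
  have hmulsub : n₀ * q = n₀ * (q - 1) + n₀ := by
    have e : q - 1 = q' := by omega
    rw [e, hq', Nat.mul_succ]
  have hsplit : n = n % n₀ + n₀ + n₀ * (q - 1) := by
    generalize hY : n₀ * q = Y at hdm hmulsub
    generalize hX : n₀ * (q - 1) = X at hmulsub ⊢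
    omega
  have hpowsplit : M ^ n = M ^ (n % n₀) * N * N ^ (q - 1) := by
    show M ^ n = M ^ (n % n₀) * M ^ n₀ * (M ^ n₀) ^ (q - 1)
    rw [← pow_mul, ← pow_add, ← pow_add]
    conv_lhs => rw [hsplit]
  have hcv := count_vec_substPow σ n a
  have hcvpos : ∀ b, 0 < ((substPow σ n [a]).count b : ℝ) := by
    intro b
    have h1 := congrFun hcv b
    rw [h1, single_vecMul]
    exact hMpos_all n (by omega) a b
  have hvnn : ∀ b, 0 ≤ Matrix.vecMul (Pi.single a 1) (M ^ (n % n₀)) b := by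
    intro b
    have h1 := congrFun (count_vec_substPow σ (n % n₀) a) b
    rw [← h1]
    positivity
  have hvex : ∃ b, 0 < Matrix.vecMul (Pi.single a 1) (M ^ (n % n₀)) b := by
    have hne : substPow σ (n % n₀) [a] ≠ [] := substPow_ne_nil hσne _ (by simp)
    obtain ⟨b, hb⟩ := List.exists_mem_of_ne_nil _ hne
    refine ⟨b, ?_⟩
    have h1 := congrFun (count_vec_substPow σ (n % n₀) a) b
    rw [← h1]
    exact_mod_cast List.count_pos_iff.mpr hb
  set x₀ := Matrix.vecMul (Matrix.vecMul (Pi.single a 1) (M ^ (n % n₀))) N with hx₀def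
  have hx₀pos : ∀ b, 0 < x₀ b := vecMul_pos hNpos hvnn hvex
  have hstart : projMetric x₀ α ≤ D := by
    rw [hDdef]
    exact start_bound hNpos hvnn hvex hα
  have hchain : projMetric (Matrix.vecMul x₀ (N ^ (q - 1)))
      (Matrix.vecMul α (N ^ (q - 1))) ≤ τ ^ (q - 1) * projMetric x₀ α := by
    have h1 := chain_bound hNpos hn2 hx₀pos hα (q - 1)
    rw [← hτdef] at h1
    exact h1
  have heigN : Matrix.vecMul α (N ^ (q - 1)) = (lam ^ (n₀ * (q - 1))) • α := by
    show Matrix.vecMul α ((M ^ n₀) ^ (q - 1)) = _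
    rw [← pow_mul]
    exact eigen_pow heig (n₀ * (q - 1))
  have hlampow : 0 < lam ^ (n₀ * (q - 1)) := pow_pos hlam _
  have hfinal : projMetric (fun b => ((substPow σ n [a]).count b : ℝ)) α
      ≤ τ ^ (q - 1) * D := by
    have hxmn : (fun b => ((substPow σ n [a]).count b : ℝ))
        = Matrix.vecMul x₀ (N ^ (q - 1)) := by
      rw [hcv, hpowsplit, ← Matrix.vecMul_vecMul, ← Matrix.vecMul_vecMul, ← hx₀def]
    rw [hxmn]
    calc projMetric (Matrix.vecMul x₀ (N ^ (q - 1))) α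
        = projMetric (Matrix.vecMul x₀ (N ^ (q - 1))) (Matrix.vecMul α (N ^ (q - 1))) := by
          rw [heigN, projMetric_smul_right hlampow]
      _ ≤ τ ^ (q - 1) * projMetric x₀ α := hchain
      _ ≤ τ ^ (q - 1) * D := mul_le_mul_of_nonneg_left hstart (pow_nonneg hτ0 _)
  have hl1 := l1_bound hcvpos hα
  have hlen : ((substPow σ n [a]).length : ℝ) = ∑ b, ((substPow σ n [a]).count b : ℝ) := by
    rw [length_eq_sum_count]
    push_cast
    rfl
  have hαsum : l1norm α = ∑ b, α b := by
    rw [l1norm]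
    exact Finset.sum_congr rfl fun b _ => abs_of_pos (hα b)
  rw [hτpow n]
  calc l1norm (fun b => ((substPow σ n [a]).count b : ℝ) / ((substPow σ n [a]).length : ℝ)
        - α b / l1norm α)
      = ∑ b, |((substPow σ n [a]).count b : ℝ) / (∑ c, ((substPow σ n [a]).count c : ℝ))
          - α b / (∑ c, α c)| := by
        rw [l1norm]
        apply Finset.sum_congr rfl
        intro b _
        simp only [hlen, hαsum]
    _ ≤ Real.exp (projMetric (fun b => ((substPow σ n [a]).count b : ℝ)) α) - 1 := hl1
    _ ≤ Real.exp (D * τ ^ (n / n₀ - 1)) - 1 := by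
        apply sub_le_sub_right
        rw [Real.exp_le_exp]
        calc projMetric (fun b => ((substPow σ n [a]).count b : ℝ)) α
            ≤ τ ^ (q - 1) * D := hfinal
          _ = D * τ ^ (n / n₀ - 1) := by
              rw [hqdef]
              ring
end
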